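/- arXiv:2209.07040 — 4 statements merged into one kernel-verified Lean document; each statement's English description precedes it below -/
import Mathlib

section
/- Under assumptions A1–A2 with x₀ ∈ ℝ and a ∈ (−1,1), the closed-loop states (X_t)_{t∈ℕ₀} under the AICMSS control strategy satisfy, for all λ ∈ (a²,1) and all t ∈ ℕ₀: 𝔼[X_t²] ≤ x₀² + β(λ)/(1 − λ), where S₁ := 𝔼[|W_t|], S₂ := 𝔼[|W_t|²], D₁ := |b|U_max + S₁, D₂ := b²U_max² + 2|b|U_max·S₁ + S₂, E(λ) := (|a|D₁ + √(a²D₁² + (λ − a²)D₂)) / (λ − a²), and β(λ) := a²E(λ)² + 2|a|E(λ)D₁ + D₂. -/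
open MeasureTheory ProbabilityTheory Real
open scoped ENNReal NNReal RealInnerProductSpace Matrix

noncomputable section

/-- The saturation function `σ_r`. -/
def sat (r x : ℝ) : ℝ := if |x| ≤ r then x else r * x / |x|

/-- The Moore–Penrose pseudoinverse of a real matrix, characterized (uniquely) by the four
Penrose equations. -/
def pinv {m n : ℕ} (A : Matrix (Fin m) (Fin n) ℝ) : Matrix (Fin n) (Fin m) ℝ :=
  letI := Classical.propDecidable
  if h : ∃ B : Matrix (Fin n) (Fin m) ℝ,
      A * B * A = A ∧ B * A * B = B ∧ (A * B)ᵀ = A * B ∧ (B * A)ᵀ = B * A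
  then h.choose else 0

/-- `ℝ²` with the Euclidean norm. -/
abbrev E2 := EuclideanSpace ℝ (Fin 2)

/-- The uniform probability distribution on `[-C, C]`. -/
def uniformLaw (C : ℝ) : Measure ℝ :=
  (ENNReal.ofReal (2 * C))⁻¹ • (volume.restrict (Set.Icc (-C) C))

/-- The closed-loop system under the AICMSS control strategy, together with the standing
assumptions A1–A2 of the paper. -/
structure AICMSS (Ω : Type*) [MeasurableSpace Ω] (P : Measure Ω) where
  a : ℝ
  b : ℝ
  σW : ℝ
  Umax : ℝ
  C : ℝ
  x0 : ℝ
  aInit : ℝ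
  bInit : ℝ
  W : ℕ → Ω → ℝ
  V : ℕ → Ω → ℝ
  X : ℕ → Ω → ℝ
  U : ℕ → Ω → ℝ
  θhat : ℕ → Ω → E2
  G : ℕ → Ω → ℝ
  hσW : 0 < σW
  ha : |a| ≤ 1
  hb : b ≠ 0
  hCpos : 0 < C
  hCU : C < Umax
  hbInit : bInit ≠ 0
  measW : ∀ t, Measurable (W t)
  measV : ∀ t, Measurable (V t)
  measX : ∀ t, Measurable (X t)
  measU : ∀ t, Measurable (U t)
  measθ : ∀ t, Measurable (θhat t)
  hWlaw : ∀ t, P.map (W t) = gaussianReal 0 ⟨σW ^ 2, sq_nonneg σW⟩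
  hVlaw : ∀ t, P.map (V t) = uniformLaw C
  hIndep : iIndepFun (Sum.elim W V) P
  hX0 : ∀ ω, X 0 ω = x0
  hGinit : ∀ t ω, t ≤ 1 → G t ω = -(aInit / bInit)
  hG : ∀ t ω, 2 ≤ t →
    G t ω = -(WithLp.equiv 2 (Fin 2 → ℝ) (θhat (t - 1) ω) 0 /
              WithLp.equiv 2 (Fin 2 → ℝ) (θhat (t - 1) ω) 1)
  hU : ∀ t ω, U t ω = sat (Umax - C) (G t ω * X t ω) + V t ω
  hXrec : ∀ t ω, X (t + 1) ω = a * X t ω + b * U t ω + W t ω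
  hθ : ∀ t ω, 1 ≤ t →
    θhat t ω = (WithLp.equiv 2 (Fin 2 → ℝ)).symm
      ((pinv ((Matrix.of fun (s : Fin t) (j : Fin 2) =>
            if j = 0 then X (s.1 + 1) ω else U (s.1 + 1) ω)ᵀ *
          (Matrix.of fun (s : Fin t) (j : Fin 2) =>
            if j = 0 then X (s.1 + 1) ω else U (s.1 + 1) ω)) *
        (Matrix.of fun (s : Fin t) (j : Fin 2) =>
            if j = 0 then X (s.1 + 1) ω else U (s.1 + 1) ω)ᵀ).mulVec
        fun s : Fin t => X (s.1 + 2) ω)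

namespace AICMSS

variable {Ω : Type*} [MeasurableSpace Ω] {P : Measure Ω}

/-- The state-input data `Z_t = (X_t, U_t)`. -/
def Z (S : AICMSS Ω P) (t : ℕ) (ω : Ω) : E2 :=
  (WithLp.equiv 2 (Fin 2 → ℝ)).symm ![S.X t ω, S.U t ω]

/-- The true parameter `θ* = (a, b)`. -/
def θstar (S : AICMSS Ω P) : E2 := (WithLp.equiv 2 (Fin 2 → ℝ)).symm ![S.a, S.b]

/-- `D = U_max - C`. -/
def D (S : AICMSS Ω P) : ℝ := S.Umax - S.C

/-- The empirical covariance matrix `∑_{t=1}^i Z_t Z_tᵀ`. -/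
def covMat (S : AICMSS Ω P) (i : ℕ) (ω : Ω) : Matrix (Fin 2) (Fin 2) ℝ :=
  ∑ t ∈ Finset.Icc 1 i,
    Matrix.vecMulVec (WithLp.equiv 2 (Fin 2 → ℝ) (S.Z t ω))
      (WithLp.equiv 2 (Fin 2 → ℝ) (S.Z t ω))

end AICMSS

/-- Conditional expectation of `g` given the σ-algebra `m` (notation-free wrapper). -/
def cexp {Ω : Type*} {m0 : MeasurableSpace Ω} (P : Measure Ω) (m : MeasurableSpace Ω)
    (g : Ω → ℝ) : Ω → ℝ := P[g|m]

/-- Conditional probability of the event `s` given the σ-algebra `m`. -/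
def cprob {Ω : Type*} {m0 : MeasurableSpace Ω} (P : Measure Ω) (m : MeasurableSpace Ω)
    (s : Set Ω) : Ω → ℝ := cexp P m (s.indicator fun _ => (1 : ℝ))

/-- The quadratic form `ζᵀ Γ ζ`. -/
def quadForm (Γ : Matrix (Fin 2) (Fin 2) ℝ) (ζ : E2) : ℝ :=
  dotProduct (WithLp.equiv 2 (Fin 2 → ℝ) ζ)
    (Γ.mulVec (WithLp.equiv 2 (Fin 2 → ℝ) ζ))

/-- The `(k, Γ, p)`-block martingale small-ball condition. -/
def BMSB {Ω : Type*} [m0 : MeasurableSpace Ω] (P : Measure Ω)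
    (Z : ℕ → Ω → E2) (k : ℕ) (Γ : Matrix (Fin 2) (Fin 2) ℝ) (p : ℝ) : Prop :=
  ∀ F : Filtration ℕ m0,
    (∀ ζ : E2, Adapted F fun t ω => (⟪ζ, Z t ω⟫ : ℝ)) →
    ∀ ζ : E2, ‖ζ‖ = 1 → ∀ j : ℕ,
      ∀ᵐ ω ∂P, p ≤ (k : ℝ)⁻¹ * ∑ i ∈ Finset.Icc 1 k,
        cprob P (F j) {ω' | Real.sqrt (quadForm Γ ζ) ≤ |⟪ζ, Z (j + i) ω'⟫|} ω

/-- Minimum eigenvalue of a (Hermitian) real matrix. -/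
def minEig (A : Matrix (Fin 2) (Fin 2) ℝ) : ℝ :=
  if h : A.IsHermitian then ⨅ i, h.eigenvalues i else 0

/-- Maximum eigenvalue of a (Hermitian) real matrix. -/
def maxEig (A : Matrix (Fin 2) (Fin 2) ℝ) : ℝ :=
  if h : A.IsHermitian then ⨆ i, h.eigenvalues i else 0


namespace StabAux

/-- Dominating process functional. -/
def rho (x0 A D0 : ℝ) : ℕ → (ℕ → ℝ) → ℝ
  | 0, _ => |x0|
  | n+1, w => A * rho x0 A D0 n w + D0 + |w n|

lemma rho_nonneg {x0 A D0 : ℝ} (hA : 0 ≤ A) (hD : 0 ≤ D0) (n : ℕ) (w : ℕ → ℝ) :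
    0 ≤ rho x0 A D0 n w := by
  induction n with
  | zero => exact abs_nonneg _
  | succ n ih =>
    have h1 := abs_nonneg (w n)
    have h2 := mul_nonneg hA ih
    simp only [rho]; linarith

lemma rho_congr {x0 A D0 : ℝ} {n : ℕ} {w w' : ℕ → ℝ} (h : ∀ s < n, w s = w' s) :
    rho x0 A D0 n w = rho x0 A D0 n w' := by
  induction n with
  | zero => rfl
  | succ n ih =>
    simp only [rho]
    rw [ih fun s hs => h s (hs.trans (Nat.lt_succ_self n)), h n (Nat.lt_succ_self n)]

lemma measurable_rho (x0 A D0 : ℝ) (n : ℕ) : Measurable (rho x0 A D0 n) := by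
  induction n with
  | zero => exact measurable_const
  | succ n ih =>
    exact ((measurable_const.mul ih).add measurable_const).add
      ((measurable_pi_apply n).abs)

lemma abs_sat_le {r : ℝ} (hr : 0 ≤ r) (x : ℝ) : |sat r x| ≤ r := by
  unfold sat
  split_ifs with h
  · exact h
  · have hx : r < |x| := not_le.1 h
    have hx0 : |x| ≠ 0 := ne_of_gt (lt_of_le_of_lt hr hx)
    rw [abs_div, abs_mul, abs_abs, abs_of_nonneg hr, mul_div_assoc, div_self hx0, mul_one]

lemma Espec (A D1 D2 c : ℝ) (hA : 0 ≤ A) (hD1 : 0 ≤ D1) (hD2 : 0 ≤ D2) (hc : 0 < c) :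
    0 ≤ (A * D1 + Real.sqrt (A ^ 2 * D1 ^ 2 + c * D2)) / c ∧
    c * ((A * D1 + Real.sqrt (A ^ 2 * D1 ^ 2 + c * D2)) / c) ^ 2 =
      2 * A * D1 * ((A * D1 + Real.sqrt (A ^ 2 * D1 ^ 2 + c * D2)) / c) + D2 ∧
    (0 < (A * D1 + Real.sqrt (A ^ 2 * D1 ^ 2 + c * D2)) / c ∨ A * D1 = 0) := by
  have hΔ : (0:ℝ) ≤ A ^ 2 * D1 ^ 2 + c * D2 := by positivity
  have hs := Real.sq_sqrt hΔ
  have hs0 := Real.sqrt_nonneg (A ^ 2 * D1 ^ 2 + c * D2)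
  have hAD : 0 ≤ A * D1 := mul_nonneg hA hD1
  refine ⟨div_nonneg (by linarith) hc.le, ?_, ?_⟩
  · field_simp
    nlinarith [hs]
  · rcases hAD.lt_or_eq with h | h
    · left
      have hnum : 0 < A * D1 + Real.sqrt (A ^ 2 * D1 ^ 2 + c * D2) := by linarith
      exact div_pos hnum hc
    · right; exact h.symm

lemma step_bound {a2 q D2 lam E m n : ℝ} (hc : 0 < lam - a2) (ha2 : 0 ≤ a2) (hq : 0 ≤ q)
    (hD2 : 0 ≤ D2) (hE : 0 ≤ E) (hm : 0 ≤ m) (hn : 0 ≤ n) (hnm : n ^ 2 ≤ m)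
    (hEeq : (lam - a2) * E ^ 2 = q * E + D2) (hEq : 0 < E ∨ q = 0) :
    a2 * m + q * n + D2 ≤ lam * m + (a2 * E ^ 2 + q * E + D2) := by
  rcases le_total n E with h | h
  · nlinarith [mul_le_mul_of_nonneg_left h hq, mul_nonneg hc.le hm,
      mul_nonneg ha2 (sq_nonneg E)]
  · rcases hEq with hEpos | hq0
    · nlinarith [mul_nonneg (mul_nonneg hc.le hEpos.le) (sub_nonneg.2 hnm),
        mul_nonneg (mul_nonneg hc.le hEpos.le) (sq_nonneg (n - E)),
        mul_nonneg (mul_nonneg hc.le (sq_nonneg E)) hn,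
        mul_nonneg ha2 (mul_nonneg (sq_nonneg E) hE),
        mul_nonneg hD2 (sub_nonneg.2 h)]
    · subst hq0
      nlinarith [mul_nonneg hc.le hm, mul_nonneg ha2 (sq_nonneg E)]

lemma geom_bound {lam β K : ℝ} (hl0 : 0 ≤ lam) (hl1 : lam < 1) (hβ : 0 ≤ β) (hK : 0 ≤ K)
    (m : ℕ → ℝ) (h0 : m 0 ≤ K) (hstep : ∀ t, m (t + 1) ≤ lam * m t + β) :
    ∀ t, m t ≤ K + β / (1 - lam) := by
  have h1l : (0:ℝ) < 1 - lam := by linarith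
  have hd : 0 ≤ β / (1 - lam) := div_nonneg hβ h1l.le
  intro t
  induction t with
  | zero => linarith
  | succ t ih =>
    have h2 : lam * m t ≤ lam * (K + β / (1 - lam)) := mul_le_mul_of_nonneg_left ih hl0
    have h3 : lam * (β / (1 - lam)) + β = β / (1 - lam) := by field_simp; ring
    have h4 := hstep t
    nlinarith [mul_le_mul_of_nonneg_right hl1.le hK]

end StabAux

theorem stability_aux {Ω : Type*} [MeasurableSpace Ω] (P : Measure Ω)
    [IsProbabilityMeasure P] (S : AICMSS Ω P) (lam : ℝ)
    (hlam1 : S.a ^ 2 < lam) (hlam2 : lam < 1) (t : ℕ)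
    (S1 S2 D1 D2 Elam β : ℝ)
    (hS1 : S1 = ∫ ω, |S.W 0 ω| ∂P)
    (hS2 : S2 = ∫ ω, |S.W 0 ω| ^ 2 ∂P)
    (hD1 : D1 = |S.b| * S.Umax + S1)
    (hD2 : D2 = S.b ^ 2 * S.Umax ^ 2 + 2 * |S.b| * S.Umax * S1 + S2)
    (hEl : Elam = (|S.a| * D1 + Real.sqrt (S.a ^ 2 * D1 ^ 2 + (lam - S.a ^ 2) * D2)) /
      (lam - S.a ^ 2))
    (hβ : β = S.a ^ 2 * Elam ^ 2 + 2 * |S.a| * Elam * D1 + D2) :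
    ∫⁻ ω, ENNReal.ofReal (S.X t ω ^ 2) ∂P ≤ ENNReal.ofReal (S.x0 ^ 2 + β / (1 - lam)) := by
  classical
  set A := |S.a| with hA_def
  set D0 := |S.b| * S.Umax with hD0_def
  have hA : 0 ≤ A := abs_nonneg _
  have hUmax : 0 < S.Umax := S.hCpos.trans S.hCU
  have hD0nn : 0 ≤ D0 := mul_nonneg (abs_nonneg _) hUmax.le
  have hc : 0 < lam - S.a ^ 2 := sub_pos.2 hlam1
  have hlam0 : 0 < lam := lt_of_le_of_lt (sq_nonneg _) hlam1
  set R : ℕ → Ω → ℝ := fun n ω => StabAux.rho S.x0 A D0 n fun s => S.W s ω with hR_def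
  have hRnn : ∀ n ω, 0 ≤ R n ω := fun n ω => StabAux.rho_nonneg hA hD0nn n _
  have hRmeas : ∀ n, Measurable (R n) := fun n =>
    (StabAux.measurable_rho _ _ _ n).comp (measurable_pi_lambda _ fun s => S.measW s)
  have hR0 : R 0 = fun _ : Ω => |S.x0| := by funext ω; simp [hR_def, StabAux.rho]
  have hRrec : ∀ k, R (k + 1) = fun ω => A * R k ω + D0 + |S.W k ω| := by
    intro k; funext ω; simp [hR_def, StabAux.rho]
  -- Gaussian moments
  have hσ2 : (0:ℝ) < S.σW ^ 2 := by have := S.hσW; positivity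
  have hv : (⟨S.σW ^ 2, sq_nonneg S.σW⟩ : ℝ≥0) ≠ 0 := by
    intro h
    exact hσ2.ne' (congrArg (fun x : ℝ≥0 => (x : ℝ)) h)
  have hgauss : MemLp (id : ℝ → ℝ) 2 (gaussianReal 0 ⟨S.σW ^ 2, sq_nonneg S.σW⟩) := by
    set v : ℝ≥0 := ⟨S.σW ^ 2, sq_nonneg S.σW⟩ with hv_def
    have hvpos : (0:ℝ) < (v : ℝ) := hσ2
    have hb : (0:ℝ) < (2 * (v:ℝ))⁻¹ := by positivity
    have hint : Integrable (fun x : ℝ => x ^ 2 * gaussianPDFReal 0 v x) := by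
      have h2 : Integrable (fun x : ℝ =>
          (Real.sqrt (2 * π * v))⁻¹ * (x ^ (((2:ℕ)):ℝ) * Real.exp (-(2 * (v:ℝ))⁻¹ * x ^ 2))) :=
        (integrable_rpow_mul_exp_neg_mul_sq hb (by norm_num)).const_mul _
      refine h2.congr (Filter.Eventually.of_forall fun x => ?_)
      simp only [gaussianPDFReal]
      rw [Real.rpow_natCast]
      have harg : -(2 * (v:ℝ))⁻¹ * x ^ 2 = -(x - 0) ^ 2 / (2 * (v:ℝ)) := by ring
      rw [harg]
      ring
    rw [memLp_two_iff_integrable_sq aestronglyMeasurable_id,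
      gaussianReal_of_var_ne_zero _ hv,
      integrable_withDensity_iff (measurable_gaussianPDF _ _)
        (Filter.Eventually.of_forall fun x => ENNReal.ofReal_lt_top)]
    refine hint.congr (Filter.Eventually.of_forall fun x => ?_)
    simp only [gaussianPDF, id_eq]
    rw [ENNReal.toReal_ofReal (gaussianPDFReal_nonneg _ _ _)]
  have hW2 : ∀ n, MemLp (S.W n) 2 P := by
    intro n
    have h1 : MemLp (id : ℝ → ℝ) 2 (P.map (S.W n)) := by rw [S.hWlaw n]; exact hgauss
    have h2 := (memLp_map_measure_iff aestronglyMeasurable_id (S.measW n).aemeasurable).mp h1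
    simpa [Function.comp] using h2
  -- identical moments
  have hS1t : ∀ n, ∫ ω, |S.W n ω| ∂P = S1 := by
    intro n
    have h0 : ∀ k : ℕ, ∫ ω, |S.W k ω| ∂P
        = ∫ x, |x| ∂(gaussianReal 0 ⟨S.σW ^ 2, sq_nonneg S.σW⟩) := by
      intro k
      rw [← S.hWlaw k,
        integral_map (S.measW k).aemeasurable measurable_abs.aestronglyMeasurable]
    rw [hS1, h0 n, h0 0]
  have hS2t : ∀ n, ∫ ω, |S.W n ω| ^ 2 ∂P = S2 := by
    intro n
    have h0 : ∀ k : ℕ, ∫ ω, |S.W k ω| ^ 2 ∂P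
        = ∫ x, |x| ^ 2 ∂(gaussianReal 0 ⟨S.σW ^ 2, sq_nonneg S.σW⟩) := by
      intro k
      rw [← S.hWlaw k,
        integral_map (S.measW k).aemeasurable
          ((measurable_abs.pow_const 2).aestronglyMeasurable)]
    rw [hS2, h0 n, h0 0]
  have hS1nn : 0 ≤ S1 := by rw [hS1]; exact integral_nonneg fun ω => abs_nonneg _
  have hS2nn : 0 ≤ S2 := by rw [hS2]; exact integral_nonneg fun ω => by positivity
  have hD1nn : 0 ≤ D1 := by rw [hD1]; positivity
  have hD2' : D2 = D0 ^ 2 + 2 * D0 * S1 + S2 := by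
    rw [hD2, hD0_def, mul_pow, sq_abs]; ring
  have hD2nn : 0 ≤ D2 := by rw [hD2']; positivity
  -- L² bounds for R
  have hR2 : ∀ n, MemLp (R n) 2 P := by
    intro n
    induction n with
    | zero => rw [hR0]; exact memLp_const _
    | succ n ih =>
      rw [hRrec n]
      exact ((ih.const_mul A).add (memLp_const D0)).add (hW2 n).abs
  have int_R : ∀ n, Integrable (R n) P := fun n => (hR2 n).integrable one_le_two
  have int_Rsq : ∀ n, Integrable (fun ω => R n ω ^ 2) P := fun n => (hR2 n).integrable_sq
  have int_absW : ∀ n, Integrable (fun ω => |S.W n ω|) P := fun n =>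
    (hW2 n).abs.integrable one_le_two
  have int_absWsq : ∀ n, Integrable (fun ω => |S.W n ω| ^ 2) P := fun n =>
    (hW2 n).abs.integrable_sq
  -- independence of R n and W n
  have hInd : ∀ n, IndepFun (R n) (S.W n) P := by
    intro n
    have hfmeas : ∀ i, Measurable (Sum.elim S.W S.V i) := by
      rintro (s | s); exacts [S.measW s, S.measV s]
    set Sn : Finset (ℕ ⊕ ℕ) := (Finset.range n).image Sum.inl with hSn_def
    set Tn : Finset (ℕ ⊕ ℕ) := ({Sum.inl n} : Finset (ℕ ⊕ ℕ)) with hTn_def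
    have hdisj : Disjoint Sn Tn := by
      rw [Finset.disjoint_left]
      intro i hi hi'
      simp only [hSn_def, Finset.mem_image, Finset.mem_range] at hi
      simp only [hTn_def, Finset.mem_singleton] at hi'
      obtain ⟨s, hs, rfl⟩ := hi
      injection hi' with h'
      omega
    have base := S.hIndep.indepFun_finset Sn Tn hdisj hfmeas
    set φ : ((i : Sn) → ℝ) → ℝ := fun u =>
      StabAux.rho S.x0 A D0 n fun s =>
        if h : (Sum.inl s : ℕ ⊕ ℕ) ∈ Sn then u ⟨Sum.inl s, h⟩ else 0 with hφ_def
    have hφmeas : Measurable φ := by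
      apply (StabAux.measurable_rho _ _ _ n).comp
      apply measurable_pi_lambda
      intro s
      by_cases h : (Sum.inl s : ℕ ⊕ ℕ) ∈ Sn
      · simp only [dif_pos h]
        exact measurable_pi_apply _
      · simp only [dif_neg h]
        exact measurable_const
    have hnT : (Sum.inl n : ℕ ⊕ ℕ) ∈ Tn := Finset.mem_singleton_self _
    set ψ : ((i : Tn) → ℝ) → ℝ := fun u => u ⟨Sum.inl n, hnT⟩ with hψ_def
    have hψmeas : Measurable ψ := measurable_pi_apply _
    have key := base.comp hφmeas hψmeas
    have e1 : (φ ∘ fun ω (i : Sn) => Sum.elim S.W S.V i ω) = R n := by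
      funext ω
      simp only [Function.comp_apply, hφ_def, hR_def]
      apply StabAux.rho_congr
      intro s hs
      have hmem : (Sum.inl s : ℕ ⊕ ℕ) ∈ Sn := by
        rw [hSn_def]
        exact Finset.mem_image_of_mem _ (Finset.mem_range.2 hs)
      rw [dif_pos hmem]
      rfl
    have e2 : (ψ ∘ fun ω (i : Tn) => Sum.elim S.W S.V i ω) = S.W n := by
      funext ω; rfl
    rw [e1, e2] at key
    exact key
  have hIndAbs : ∀ n, IndepFun (R n) (fun ω => |S.W n ω|) P := fun n =>
    (hInd n).comp measurable_id measurable_abs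
  have hprod : ∀ n, ∫ ω, R n ω * |S.W n ω| ∂P
      = (∫ ω, R n ω ∂P) * ∫ ω, |S.W n ω| ∂P := by
    intro n
    have h := (hIndAbs n).integral_fun_mul_eq_mul_integral (hRmeas n).aestronglyMeasurable
      ((S.measW n).abs.aestronglyMeasurable)
    simpa [Pi.mul_apply] using h
  have int_RW : ∀ n, Integrable (fun ω => R n ω * |S.W n ω|) P := by
    intro n
    have h := (hIndAbs n).integrable_mul (int_R n) (int_absW n)
    exact h
  -- the second moment sequence
  set m : ℕ → ℝ := fun n => ∫ ω, R n ω ^ 2 ∂P with hm_def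
  have hmnn : ∀ n, 0 ≤ m n := fun n => integral_nonneg fun ω => sq_nonneg _
  have hnR : ∀ n, 0 ≤ ∫ ω, R n ω ∂P := fun n => integral_nonneg fun ω => hRnn n ω
  have hCS : ∀ n, (∫ ω, R n ω ∂P) ^ 2 ≤ m n := by
    intro n
    have h1 := variance_nonneg (R n) P
    have h2 := variance_eq_sub (hR2 n)
    simp only [Pi.pow_apply] at h2
    simp only [hm_def]
    linarith
  have hstep : ∀ n, m (n + 1)
      = S.a ^ 2 * m n + 2 * A * D1 * (∫ ω, R n ω ∂P) + D2 := by
    intro n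
    have Ia : Integrable (fun ω => A ^ 2 * R n ω ^ 2) P := (int_Rsq n).const_mul _
    have Ib : Integrable (fun ω => (2 * A * D0) * R n ω) P := (int_R n).const_mul _
    have Ic : Integrable (fun ω => (2 * A) * (R n ω * |S.W n ω|)) P := (int_RW n).const_mul _
    have Id : Integrable (fun ω => (2 * D0) * |S.W n ω|) P := (int_absW n).const_mul _
    have Ie : Integrable (fun ω => |S.W n ω| ^ 2 + D0 ^ 2) P :=
      (int_absWsq n).add (integrable_const _)
    have e0 : m (n + 1) = ∫ ω, (A ^ 2 * R n ω ^ 2 + (2 * A * D0) * R n ω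
        + (2 * A) * (R n ω * |S.W n ω|)
        + ((2 * D0) * |S.W n ω| + (|S.W n ω| ^ 2 + D0 ^ 2))) ∂P := by
      simp only [hm_def]
      congr 1
      funext ω
      simp only [hRrec n]
      ring
    have Iab : Integrable (fun ω => A ^ 2 * R n ω ^ 2 + (2 * A * D0) * R n ω) P := Ia.add Ib
    have Iabc : Integrable (fun ω => A ^ 2 * R n ω ^ 2 + (2 * A * D0) * R n ω
        + (2 * A) * (R n ω * |S.W n ω|)) P := Iab.add Ic
    have Ide : Integrable (fun ω => (2 * D0) * |S.W n ω| + (|S.W n ω| ^ 2 + D0 ^ 2)) P :=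
      Id.add Ie
    rw [e0, integral_add Iabc Ide, integral_add Iab Ic,
      integral_add Ia Ib, integral_add Id Ie,
      integral_add (int_absWsq n) (integrable_const _),
      integral_const_mul, integral_const_mul, integral_const_mul, integral_const_mul,
      integral_const]
    rw [hprod n, hS1t n, hS2t n]
    simp only [measure_univ, ENNReal.toReal_one, smul_eq_mul, one_mul, probReal_univ]
    rw [hD1, hD2', hA_def, sq_abs S.a]
    ring
  -- eigen-type constant
  have hEspec := StabAux.Espec A D1 D2 (lam - S.a ^ 2) hA hD1nn hD2nn hc
  rw [sq_abs S.a] at hEspec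
  rw [← hEl] at hEspec
  obtain ⟨hE0, hEeq, hEpos⟩ := hEspec
  have hstep' : ∀ n, m (n + 1) ≤ lam * m n + β := by
    intro n
    rw [hstep n, hβ]
    have hq : (0:ℝ) ≤ 2 * A * D1 := by positivity
    have h := StabAux.step_bound (a2 := S.a ^ 2) (q := 2 * A * D1) (D2 := D2) (lam := lam)
      (E := Elam) (m := m n) (n := ∫ ω, R n ω ∂P) hc (sq_nonneg _) hq hD2nn hE0
      (hmnn n) (hnR n) (hCS n) hEeq ?_
    · linarith [h]
    · rcases hEpos with h' | h'
      · exact Or.inl h'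
      · right; rw [mul_assoc, h', mul_zero]
  have hm0 : m 0 ≤ S.x0 ^ 2 := by
    simp only [hm_def, hR0]
    rw [integral_const]
    simp [sq_abs]
  have hβnn : 0 ≤ β := by
    rw [hβ]
    have h1 : 0 ≤ 2 * A * Elam * D1 := by positivity
    nlinarith [mul_nonneg (sq_nonneg S.a) (sq_nonneg Elam)]
  have hfin := StabAux.geom_bound hlam0.le hlam2 hβnn (sq_nonneg S.x0) m hm0 hstep' t
  -- a.e. domination of the state
  have hVae : ∀ᵐ ω ∂P, ∀ s, |S.V s ω| ≤ S.C := by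
    rw [ae_all_iff]
    intro s
    rw [ae_iff]
    have hmeasC : MeasurableSet ((Set.Icc (-S.C) S.C)ᶜ : Set ℝ) := measurableSet_Icc.compl
    have hset : {ω | ¬ |S.V s ω| ≤ S.C} = S.V s ⁻¹' (Set.Icc (-S.C) S.C)ᶜ := by
      ext ω; simp [abs_le]
    rw [hset, ← Measure.map_apply (S.measV s) hmeasC, S.hVlaw s]
    simp [uniformLaw, Measure.restrict_apply hmeasC, Set.compl_inter_self]
  have hXR : ∀ᵐ ω ∂P, ∀ k, |S.X k ω| ≤ R k ω := by
    filter_upwards [hVae] with ω hω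
    intro k
    induction k with
    | zero =>
      rw [S.hX0 ω]
      simp [hR0]
    | succ k ih =>
      have hsatD : (0:ℝ) ≤ S.Umax - S.C := by linarith [S.hCU]
      have hUb : |S.U k ω| ≤ S.Umax := by
        rw [S.hU k ω]
        calc |sat (S.Umax - S.C) (S.G k ω * S.X k ω) + S.V k ω|
            ≤ |sat (S.Umax - S.C) (S.G k ω * S.X k ω)| + |S.V k ω| := abs_add_le _ _
          _ ≤ (S.Umax - S.C) + S.C := add_le_add (StabAux.abs_sat_le hsatD _) (hω k)
          _ = S.Umax := by ring
      rw [S.hXrec k ω]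
      simp only [hRrec k]
      have t1 : |S.a| * |S.X k ω| ≤ A * R k ω := by
        rw [← hA_def]; exact mul_le_mul_of_nonneg_left ih hA
      have t2 : |S.b| * |S.U k ω| ≤ D0 := by
        rw [hD0_def]; exact mul_le_mul_of_nonneg_left hUb (abs_nonneg _)
      calc |S.a * S.X k ω + S.b * S.U k ω + S.W k ω|
          ≤ |S.a * S.X k ω + S.b * S.U k ω| + |S.W k ω| := abs_add_le _ _
        _ ≤ |S.a * S.X k ω| + |S.b * S.U k ω| + |S.W k ω| := by
            linarith [abs_add_le (S.a * S.X k ω) (S.b * S.U k ω)]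
        _ ≤ A * R k ω + D0 + |S.W k ω| := by
            rw [abs_mul, abs_mul]
            linarith
  have hsq : ∀ᵐ ω ∂P, ENNReal.ofReal (S.X t ω ^ 2) ≤ ENNReal.ofReal (R t ω ^ 2) := by
    filter_upwards [hXR] with ω hω
    apply ENNReal.ofReal_le_ofReal
    calc S.X t ω ^ 2 = |S.X t ω| ^ 2 := (sq_abs _).symm
      _ ≤ R t ω ^ 2 := pow_le_pow_left₀ (abs_nonneg _) (hω t) 2
  calc ∫⁻ ω, ENNReal.ofReal (S.X t ω ^ 2) ∂P
      ≤ ∫⁻ ω, ENNReal.ofReal (R t ω ^ 2) ∂P := lintegral_mono_ae hsq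
    _ = ENNReal.ofReal (∫ ω, R t ω ^ 2 ∂P) :=
        (ofReal_integral_eq_lintegral_ofReal (int_Rsq t)
          (Filter.Eventually.of_forall fun ω => sq_nonneg _)).symm
    _ ≤ ENNReal.ofReal (S.x0 ^ 2 + β / (1 - lam)) :=
        ENNReal.ofReal_le_ofReal (by simpa [hm_def] using hfin)

/-- **Lemma 7: geometric mean-square stability when `a ∈ (-1,1)`.** -/
theorem stability_a_lt_one {Ω : Type*} [MeasurableSpace Ω] (P : Measure Ω)
    [IsProbabilityMeasure P] (S : AICMSS Ω P) (ha' : S.a ∈ Set.Ioo (-1 : ℝ) 1) :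
    ∀ lam : ℝ, S.a ^ 2 < lam → lam < 1 → ∀ t : ℕ,
      let S1 : ℝ := ∫ ω, |S.W 0 ω| ∂P
      let S2 : ℝ := ∫ ω, |S.W 0 ω| ^ 2 ∂P
      let D1 : ℝ := |S.b| * S.Umax + S1
      let D2 : ℝ := S.b ^ 2 * S.Umax ^ 2 + 2 * |S.b| * S.Umax * S1 + S2
      let Elam : ℝ := (|S.a| * D1 + Real.sqrt (S.a ^ 2 * D1 ^ 2 + (lam - S.a ^ 2) * D2)) /
        (lam - S.a ^ 2)
      let β : ℝ := S.a ^ 2 * Elam ^ 2 + 2 * |S.a| * Elam * D1 + D2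
      ∫⁻ ω, ENNReal.ofReal (S.X t ω ^ 2) ∂P ≤ ENNReal.ofReal (S.x0 ^ 2 + β / (1 - lam)) := by
  intro lam hlam1 hlam2 t
  exact stability_aux P S lam hlam1 hlam2 t _ _ _ _ _ _ rfl rfl rfl rfl rfl rfl

end
end

section
/- Under assumptions A1–A2 with x₀ ∈ ℝ and a ∈ {−1,1}, the states (X*_t)_{t∈ℕ₀} of the reference system X*_{t+1} = aX*_t + b(σ_D(−(a/b)X*_t) + V_t) + W_t, X*_0 = x₀, are mean square bounded: there exists e > 0 such that 𝔼[(X*_t)²] ≤ e for all t ∈ ℕ₀. -/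
open MeasureTheory ProbabilityTheory Real
open scoped ENNReal NNReal RealInnerProductSpace Matrix

noncomputable section

lemma msb_cosh_lower (x : ℝ) : 1 + x^2/2 ≤ Real.cosh x := by
  have hs := x.hasSum_cosh.summable
  have h := Summable.sum_le_tsum (Finset.range 2)
    (fun i _ => by rw [pow_mul]; positivity) hs
  rw [← Real.cosh_eq_tsum] at h
  simpa [Finset.sum_range_succ, Nat.factorial] using h

lemma msb_cosh_contract {x y d : ℝ} (hd : 0 ≤ d) (h : |y| ≤ max (|x| - d) 0) :
    Real.cosh y ≤ Real.exp (-d) * Real.cosh x + Real.exp d := by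
  rcases le_or_gt (|x| - d) 0 with hc | hc
  · have hy : |y| ≤ 0 := by simpa [max_eq_right hc] using h
    have : y = 0 := abs_nonpos_iff.mp hy
    have h1 : (0:ℝ) < Real.exp (-d) * Real.cosh x := by positivity
    have h2 : (1:ℝ) ≤ Real.exp d := Real.one_le_exp hd
    simp [this]; nlinarith
  · have hy : |y| ≤ |x| - d := by simpa [max_eq_left hc.le] using h
    have h1 : Real.cosh y ≤ Real.cosh (|x| - d) := by
      rw [Real.cosh_le_cosh]; rw [abs_of_nonneg (by linarith : (0:ℝ) ≤ |x| - d)]; exact hy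
    have hcx : Real.cosh x = (Real.exp |x| + Real.exp (-|x|))/2 := by
      rcases abs_cases x with ⟨h',_⟩ | ⟨h',_⟩ <;> rw [Real.cosh_eq, h'] <;> ring_nf
    have hL : Real.cosh (|x| - d) = (Real.exp (|x| - d) + Real.exp (d - |x|))/2 := by
      rw [Real.cosh_eq]; ring_nf
    have e1 : Real.exp (|x| - d) = Real.exp (-d) * Real.exp |x| := by
      rw [← Real.exp_add]; ring_nf
    have e2 : Real.exp (d - |x|) ≤ Real.exp d := by
      apply Real.exp_le_exp.mpr; have := abs_nonneg x; linarith
    have e3 : (0:ℝ) ≤ Real.exp (-d) * Real.exp (-|x|) := by positivity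
    have e4 : Real.exp (-d) * Real.cosh x
        = (Real.exp (-d) * Real.exp |x| + Real.exp (-d) * Real.exp (-|x|))/2 := by
      rw [hcx]; ring
    linarith [Real.exp_pos d]

lemma msb_sat_meas (D : ℝ) : Measurable (sat D) := by
  unfold sat
  exact Measurable.ite (measurableSet_le (continuous_abs.measurable) measurable_const)
    measurable_id ((measurable_id.const_mul D).div continuous_abs.measurable)

lemma msb_sat_bound (a b D x : ℝ) (ha : a = -1 ∨ a = 1) (hb : b ≠ 0) (hD : 0 < D) :
    |a*x + b*sat D (-(a/b)*x)| ≤ max (|x| - D*|b|) 0 := by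
  have hab : |a| = 1 := by rcases ha with h | h <;> simp [h]
  have hb' : (0:ℝ) < |b| := abs_pos.mpr hb
  set y := -(a/b)*x with hy
  have hyabs : |y| = |x| / |b| := by
    rw [hy, abs_mul, abs_neg, abs_div, hab]; ring
  unfold sat
  by_cases hcase : |y| ≤ D
  · rw [if_pos hcase]
    have hz : b * y = -(a*x) := by rw [hy]; field_simp
    have : a*x + b*y = 0 := by rw [hz]; ring
    rw [this]; simp
  · rw [if_neg hcase]
    push_neg at hcase
    have hxpos : |x| > D * |b| := by
      rw [hyabs] at hcase
      calc D * |b| < (|x|/|b|) * |b| := (mul_lt_mul_iff_of_pos_right hb').mpr hcase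
        _ = |x| := by field_simp
    have hx0 : (0:ℝ) < |x| := lt_trans (by positivity) hxpos
    have key : a*x + b*(D*y/|y|) = a*x*(1 - D*|b|/|x|) := by
      rw [hyabs, hy]; field_simp; ring
    rw [key, abs_mul, abs_mul, hab, one_mul]
    have hfrac : D*|b|/|x| < 1 := (div_lt_one hx0).mpr hxpos
    rw [abs_of_pos (by linarith : (0:ℝ) < 1 - D*|b|/|x|)]
    have : |x| * (1 - D*|b|/|x|) = |x| - D*|b| := by field_simp
    rw [this]; exact le_max_left _ _


lemma msb_gauss_key (v : ℝ≥0) (hv : v ≠ 0) (s x : ℝ) :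
    Real.exp (s*x) * gaussianPDFReal 0 v x
      = Real.exp (s^2*(v:ℝ)/2) * gaussianPDFReal (s*v) v x := by
  have hv0 : (0:ℝ) < (v:ℝ) := by
    exact_mod_cast lt_of_le_of_ne (zero_le (a := v)) (Ne.symm hv)
  unfold gaussianPDFReal
  rw [mul_left_comm, mul_left_comm (Real.exp (s^2*(v:ℝ)/2))]
  congr 1
  rw [← Real.exp_add, ← Real.exp_add]
  congr 1
  field_simp
  ring

lemma msb_gauss_exp (v : ℝ≥0) (hv : v ≠ 0) (s : ℝ) :
    Integrable (fun x => Real.exp (s*x)) (gaussianReal 0 v) ∧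
      ∫ x, Real.exp (s*x) ∂(gaussianReal 0 v) = Real.exp (s^2*(v:ℝ)/2) := by
  rw [gaussianReal_of_var_ne_zero _ hv]
  have hpdf : gaussianPDF 0 v = fun x => ((gaussianPDFReal 0 v x).toNNReal : ℝ≥0∞) := by
    funext x; rfl
  have hfm : Measurable (fun x => (gaussianPDFReal 0 v x).toNNReal) :=
    (measurable_gaussianPDFReal 0 v).real_toNNReal
  have hcoe : ∀ x : ℝ, ((gaussianPDFReal 0 v x).toNNReal : ℝ) = gaussianPDFReal 0 v x :=
    fun x => Real.coe_toNNReal _ (gaussianPDFReal_nonneg 0 v x)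
  constructor
  · rw [hpdf]
    refine (integrable_withDensity_iff hfm.coe_nnreal_ennreal (ae_of_all _ fun x => ENNReal.coe_lt_top)).mpr ?_
    have : (fun x => Real.exp (s*x) * ((gaussianPDFReal 0 v x).toNNReal : ℝ≥0∞).toReal)
        = fun x => Real.exp (s^2*(v:ℝ)/2) * gaussianPDFReal (s*v) v x := by
      funext x
      rw [ENNReal.coe_toReal, hcoe, msb_gauss_key v hv s]
    rw [this]
    exact (integrable_gaussianPDFReal (s*v) v).const_mul _
  · rw [hpdf, integral_withDensity_eq_integral_smul hfm]
    have : (fun x => (gaussianPDFReal 0 v x).toNNReal • Real.exp (s*x))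
        = fun x => Real.exp (s^2*(v:ℝ)/2) * gaussianPDFReal (s*v) v x := by
      funext x
      simp only [NNReal.smul_def, hcoe, smul_eq_mul]
      rw [mul_comm (gaussianPDFReal 0 v x) _, msb_gauss_key v hv s]
    rw [show (∫ x, (fun x => (gaussianPDFReal 0 v x).toNNReal • Real.exp (s*x)) x ∂volume) = _ from congrArg _ this]
    rw [integral_const_mul _ _, integral_gaussianPDFReal_eq_one (s*v) hv, mul_one]




lemma msb_uniform_prob (C : ℝ) (hC : 0 < C) : IsProbabilityMeasure (uniformLaw C) := by
  constructor
  rw [uniformLaw, Measure.smul_apply, smul_eq_mul, Measure.restrict_apply MeasurableSet.univ,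
    Set.univ_inter, Real.volume_Icc]
  rw [show C - (-C) = 2*C by ring]
  exact ENNReal.inv_mul_cancel (ne_of_gt (ENNReal.ofReal_pos.mpr (by linarith))) ENNReal.ofReal_ne_top

lemma msb_uniform_exp (C : ℝ) (hC : 0 < C) (s : ℝ) :
    Integrable (fun x => Real.exp (s*x)) (uniformLaw C) ∧
      ∫ x, Real.exp (s*x) ∂(uniformLaw C) ≤ Real.cosh (s*C) := by
  have hle : -C ≤ C := by linarith
  have hcont : ∀ g : ℝ → ℝ, Continuous g → Integrable (fun x => g (s*x)) (volume.restrict (Set.Icc (-C) C)) := by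
    intro g hg
    exact (hg.comp (continuous_const.mul continuous_id)).integrableOn_Icc
  have hIcosh := hcont Real.cosh Real.continuous_cosh
  have hIsinh := hcont Real.sinh Real.continuous_sinh
  have hIexp := hcont Real.exp Real.continuous_exp
  have hne : (ENNReal.ofReal (2*C))⁻¹ ≠ ⊤ := by
    simp [ENNReal.inv_ne_top]; linarith
  have hsinh0 : ∫ x in Set.Icc (-C) C, Real.sinh (s*x) = 0 := by
    have h1 : ∫ x in Set.Icc (-C) C, Real.sinh (s*x) = ∫ x in (-C)..C, Real.sinh (s*x) := by
      rw [intervalIntegral.integral_of_le hle, integral_Icc_eq_integral_Ioc]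
    have h2 := intervalIntegral.integral_comp_neg (a := -C) (b := C) (fun x => Real.sinh (s*x))
    simp only [mul_neg, Real.sinh_neg, neg_neg, intervalIntegral.integral_neg] at h2
    rw [h1]; linarith
  have hcoshle : ∫ x in Set.Icc (-C) C, Real.cosh (s*x) ≤ Real.cosh (s*C) * (2*C) := by
    have h1 : ∫ x in Set.Icc (-C) C, Real.cosh (s*x) ≤ ∫ _x in Set.Icc (-C) C, Real.cosh (s*C) := by
      refine setIntegral_mono_on hIcosh (integrableOn_const (by simp [Real.volume_Icc])) measurableSet_Icc ?_
      intro x hx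
      rw [Real.cosh_le_cosh, abs_mul, abs_mul]
      have : |x| ≤ |C| := by rw [abs_of_pos hC]; exact abs_le.mpr ⟨hx.1, hx.2⟩
      exact mul_le_mul_of_nonneg_left this (abs_nonneg s)
    rw [setIntegral_const, measureReal_def, Real.volume_Icc, show C - (-C) = 2*C by ring] at h1
    rw [ENNReal.toReal_ofReal (by linarith), smul_eq_mul] at h1
    linarith
  constructor
  · exact hIexp.smul_measure hne
  · rw [uniformLaw, integral_smul_measure, ENNReal.toReal_inv, ENNReal.toReal_ofReal (by linarith)]
    have hsplit : ∀ x : ℝ, Real.exp (s*x) = Real.cosh (s*x) + Real.sinh (s*x) :=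
      fun x => (Real.cosh_add_sinh _).symm
    rw [smul_eq_mul]
    simp_rw [hsplit]
    rw [integral_add hIcosh hIsinh, hsinh0, add_zero]
    rw [inv_mul_le_iff₀ (by linarith : (0:ℝ) < 2*C)]
    calc _ ≤ Real.cosh (s*C) * (2*C) := hcoshle
    _ = _ := by ring

set_option maxHeartbeats 1000000 in
/-- **Lemma 8: mean square boundedness of the reference system when `a ∈ {-1, 1}`.** -/
theorem reference_system_msb {Ω : Type*} [MeasurableSpace Ω] (P : Measure Ω)
    [IsProbabilityMeasure P]
    (a b σW Umax C x0 : ℝ) (ha : |a| ≤ 1) (ha1 : a = -1 ∨ a = 1) (hb : b ≠ 0)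
    (hσW : 0 < σW) (hCpos : 0 < C) (hCU : C < Umax)
    (W V Xs : ℕ → Ω → ℝ)
    (measW : ∀ t, Measurable (W t)) (measV : ∀ t, Measurable (V t))
    (measXs : ∀ t, Measurable (Xs t))
    (hWlaw : ∀ t, P.map (W t) = gaussianReal 0 ⟨σW ^ 2, sq_nonneg σW⟩)
    (hVlaw : ∀ t, P.map (V t) = uniformLaw C)
    (hIndep : iIndepFun
      (Sum.elim W V) P)
    (hXs0 : ∀ ω, Xs 0 ω = x0)
    (hXsrec : ∀ t ω, Xs (t + 1) ω =
      a * Xs t ω + b * (sat (Umax - C) (-(a / b) * Xs t ω) + V t ω) + W t ω) :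
    ∃ e : ℝ, 0 < e ∧ ∀ t : ℕ,
      ∫⁻ ω, ENNReal.ofReal (Xs t ω ^ 2) ∂P ≤ ENNReal.ofReal e := by
  classical
  -- constants
  set D : ℝ := Umax - C with hDdef
  have hD : 0 < D := by simp [hDdef]; linarith
  set δ : ℝ := D * |b| with hδdef
  have habs : 0 < |b| := abs_pos.mpr hb
  have hδ : 0 < δ := mul_pos hD habs
  set κ : ℝ := b^2*C^2 + σW^2 with hκdef
  have hκ : 0 < κ := by positivity
  set lam : ℝ := δ / κ with hlamdef
  have hlam : 0 < lam := div_pos hδ hκ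
  set M : ℝ := Real.cosh (lam*b*C) * Real.exp (lam^2*σW^2/2) with hMdef
  have hM1 : 1 ≤ M := by
    have := Real.one_le_cosh (lam*b*C)
    nlinarith [Real.one_le_exp (le_of_lt (show (0:ℝ) < lam^2*σW^2/2 by positivity))]
  have hM0 : 0 < M := lt_of_lt_of_le one_pos hM1
  set ρ : ℝ := M * Real.exp (-(lam*δ)) with hρdef
  have hρ0 : 0 < ρ := by positivity
  have hρ1 : ρ < 1 := by
    have h1 : M ≤ Real.exp (lam^2*κ/2) := by
      have := Real.cosh_le_exp_half_sq (lam*b*C)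
      rw [hMdef, hκdef]
      calc Real.cosh (lam*b*C) * Real.exp (lam^2*σW^2/2)
          ≤ Real.exp ((lam*b*C)^2/2) * Real.exp (lam^2*σW^2/2) :=
            mul_le_mul_of_nonneg_right this (le_of_lt (Real.exp_pos _))
        _ = Real.exp (lam^2*(b^2*C^2+σW^2)/2) := by rw [← Real.exp_add]; ring_nf
    have h2 : ρ ≤ Real.exp (lam^2*κ/2 - lam*δ) := by
      rw [hρdef, Real.exp_sub]
      rw [div_eq_mul_inv, ← Real.exp_neg]
      exact mul_le_mul_of_nonneg_right h1 (le_of_lt (Real.exp_pos _))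
    have h3 : lam^2*κ/2 - lam*δ < 0 := by
      rw [hlamdef]
      have heq : (δ/κ)^2*κ/2 - (δ/κ)*δ = -(δ^2/(2*κ)) := by field_simp; ring
      rw [heq]
      exact neg_lt_zero.mpr (by positivity)
    calc ρ ≤ _ := h2
      _ < 1 := Real.exp_lt_one_iff.mpr h3
  set c : ℝ := M * Real.exp (lam*δ) with hcdef
  have hc0 : 0 < c := by positivity
  set B : ℝ := max (Real.cosh (lam*x0)) (c/(1-ρ)) with hBdef
  have hB0 : 0 < B := lt_of_lt_of_le (Real.cosh_pos _) (le_max_left _ _)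
  -- the closed-loop map
  set F : ℝ → ℝ := fun x => a*x + b*sat D (-(a/b)*x) with hFdef
  have hFmeas : Measurable F := by
    apply Measurable.add
    · exact measurable_id.const_mul a
    · exact ((msb_sat_meas D).comp (measurable_id.const_mul _)).const_mul b
  have hFbd : ∀ x, |F x| ≤ max (|x| - δ) 0 := fun x => msb_sat_bound a b D x ha1 hb hD
  have hstep : ∀ t ω, Xs (t+1) ω = F (Xs t ω) + (b * V t ω + W t ω) := by
    intro t ω; rw [hXsrec t ω, hFdef]; ring
  -- independence machinery
  set Z : (ℕ ⊕ ℕ) → Ω → ℝ := Sum.elim W V with hZdef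
  have hZm : ∀ i, Measurable (Z i) := by
    intro i; cases i with
    | inl n => exact measW n
    | inr n => exact measV n
  set S : ℕ → Finset (ℕ ⊕ ℕ) :=
    fun t => ((Finset.range t).image Sum.inl) ∪ ((Finset.range t).image Sum.inr) with hSdef
  set T : ℕ → Finset (ℕ ⊕ ℕ) := fun t => {Sum.inl t, Sum.inr t} with hTdef
  have hdisj : ∀ t, Disjoint (S t) (T t) := by
    intro t
    rw [Finset.disjoint_left]
    intro i hiS hiT
    simp only [hSdef, hTdef, Finset.mem_union, Finset.mem_image, Finset.mem_range,
      Finset.mem_insert, Finset.mem_singleton] at hiS hiT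
    rcases hiT with h | h <;> subst h <;>
      rcases hiS with ⟨n, hn, he⟩ | ⟨n, hn, he⟩ <;> simp_all <;> omega
  have hrep : ∀ t, ∃ g : (↥(S t) → ℝ) → ℝ,
      Measurable g ∧ ∀ ω, Xs t ω = g (fun i => Z i ω) := by
    intro t
    induction t with
    | zero => exact ⟨fun _ => x0, measurable_const, fun ω => hXs0 ω⟩
    | succ t ih =>
      obtain ⟨g, hg, hgX⟩ := ih
      have hsub : S t ⊆ S (t+1) := by
        apply Finset.union_subset_union <;>
          exact Finset.image_subset_image (Finset.range_subset_range.mpr (Nat.le_succ t))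
      have memW : Sum.inl t ∈ S (t+1) := by simp [hSdef]
      have memV : Sum.inr t ∈ S (t+1) := by simp [hSdef]
      refine ⟨fun p => F (g (fun i => p ⟨i.1, hsub i.2⟩))
        + (b * p ⟨Sum.inr t, memV⟩ + p ⟨Sum.inl t, memW⟩), ?_, ?_⟩
      · exact (hFmeas.comp (hg.comp (measurable_pi_lambda _
          (fun i => measurable_pi_apply _)))).add
          (((measurable_pi_apply (X := fun _ : ↥(S (t+1)) => ℝ) ⟨Sum.inr t, memV⟩).const_mul b).fun_add
            (measurable_pi_apply (X := fun _ : ↥(S (t+1)) => ℝ) ⟨Sum.inl t, memW⟩))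
      · intro ω
        rw [hstep t ω, hgX ω]
        rfl
  have hIndXN : ∀ t, IndepFun (Xs t) (fun ω => (W t ω, V t ω)) P := by
    intro t
    obtain ⟨g, hg, hgX⟩ := hrep t
    have meml : Sum.inl t ∈ T t := by simp [hTdef]
    have memr : Sum.inr t ∈ T t := by simp [hTdef]
    have base := hIndep.indepFun_finset (S t) (T t) (hdisj t) hZm
    have hh : Measurable (fun p : (↥(T t) → ℝ) =>
        (p ⟨Sum.inl t, meml⟩, p ⟨Sum.inr t, memr⟩)) :=
      (measurable_pi_apply _).prodMk (measurable_pi_apply _)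
    have hcomp := base.comp hg hh
    have heq1 : (g ∘ fun ω (i : ↥(S t)) => Z i ω) = Xs t := by
      funext ω; exact (hgX ω).symm
    have heq2 : ((fun p : (↥(T t) → ℝ) => (p ⟨Sum.inl t, meml⟩, p ⟨Sum.inr t, memr⟩))
        ∘ (fun ω (i : ↥(T t)) => Z i ω)) = fun ω => (W t ω, V t ω) := rfl
    rw [heq1, heq2] at hcomp
    exact hcomp
  have hIndWV : ∀ t, IndepFun (V t) (W t) P := by
    intro t
    have h := hIndep.indepFun (show (Sum.inr t : ℕ⊕ℕ) ≠ Sum.inl t by simp)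
    exact h
  -- noise exponential moments
  set v : ℝ≥0 := (⟨σW^2, sq_nonneg σW⟩ : ℝ≥0) with hvdef
  have hvne : v ≠ 0 := by
    intro h
    have : (v:ℝ) = 0 := by rw [h]; rfl
    have hv' : (v:ℝ) = σW^2 := rfl
    nlinarith
  have hexpmeas : ∀ s : ℝ, StronglyMeasurable (fun x : ℝ => Real.exp (s*x)) :=
    fun s => (Real.continuous_exp.comp (continuous_const.mul continuous_id)).stronglyMeasurable
  have hWexp : ∀ (t : ℕ) (s : ℝ), Integrable (fun ω => Real.exp (s * W t ω)) P ∧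
      ∫ ω, Real.exp (s * W t ω) ∂P = Real.exp (s^2*σW^2/2) := by
    intro t s
    obtain ⟨hint, hval⟩ := msb_gauss_exp v hvne s
    rw [← hWlaw t] at hint hval
    constructor
    · exact (integrable_map_measure (hexpmeas s).aestronglyMeasurable
        (measW t).aemeasurable).mp hint
    · rw [integral_map (measW t).aemeasurable (hexpmeas s).aestronglyMeasurable] at hval
      exact hval
  have hVexp : ∀ (t : ℕ) (s : ℝ), Integrable (fun ω => Real.exp (s * V t ω)) P ∧
      ∫ ω, Real.exp (s * V t ω) ∂P ≤ Real.cosh (s*C) := by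
    intro t s
    obtain ⟨hint, hval⟩ := msb_uniform_exp C hCpos s
    rw [← hVlaw t] at hint hval
    constructor
    · exact (integrable_map_measure (hexpmeas s).aestronglyMeasurable
        (measV t).aemeasurable).mp hint
    · rw [integral_map (measV t).aemeasurable (hexpmeas s).aestronglyMeasurable] at hval
      exact hval
  have hE : ∀ (t : ℕ) (s : ℝ), s = lam ∨ s = -lam →
      Integrable (fun ω => Real.exp (s*(b*V t ω + W t ω))) P ∧
      ∫ ω, Real.exp (s*(b*V t ω + W t ω)) ∂P ≤ M := by
    intro t s hs
    obtain ⟨hVi, hVv⟩ := hVexp t (s*b)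
    obtain ⟨hWi, hWv⟩ := hWexp t s
    have hprod : (fun ω => Real.exp (s*(b*V t ω + W t ω)))
        = (fun ω => Real.exp (s*b*V t ω)) * (fun ω => Real.exp (s * W t ω)) := by
      funext ω
      rw [Pi.mul_apply, ← Real.exp_add]
      congr 1; ring
    have hind : IndepFun (fun ω => Real.exp (s*b*V t ω)) (fun ω => Real.exp (s*W t ω)) P :=
      (hIndWV t).comp (measurable_exp.comp (measurable_id.const_mul (s*b)))
        (measurable_exp.comp (measurable_id.const_mul s))
    refine ⟨by rw [hprod]; exact hind.integrable_mul hVi hWi, ?_⟩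
    rw [hprod, hind.integral_mul_eq_mul_integral hVi.aestronglyMeasurable hWi.aestronglyMeasurable]
    have hcosh : Real.cosh (s*b*C) = Real.cosh (lam*b*C) := by
      rcases hs with h | h <;> subst h
      · rfl
      · rw [show (-lam)*b*C = -(lam*b*C) by ring, Real.cosh_neg]
    have h2 : Real.exp (s^2*σW^2/2) = Real.exp (lam^2*σW^2/2) := by
      rcases hs with h | h <;> subst h
      · rfl
      · norm_num
    rw [hWv, h2, hMdef]
    exact mul_le_mul_of_nonneg_right (le_trans hVv (le_of_eq hcosh))
      (le_of_lt (Real.exp_pos _))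
  -- contraction pointwise
  have hcontr : ∀ x : ℝ, Real.cosh (lam * F x)
      ≤ Real.exp (-(lam*δ)) * Real.cosh (lam*x) + Real.exp (lam*δ) := by
    intro x
    apply msb_cosh_contract (by positivity : (0:ℝ) ≤ lam*δ)
    rw [abs_mul, abs_of_pos hlam, abs_mul, abs_of_pos hlam]
    calc lam * |F x| ≤ lam * max (|x| - δ) 0 :=
          mul_le_mul_of_nonneg_left (hFbd x) hlam.le
      _ = max (lam*(|x|-δ)) (lam*0) := mul_max_of_nonneg _ _ hlam.le
      _ = max (lam*|x| - lam*δ) 0 := by rw [mul_zero]; ring_nf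
  -- main induction
  have hmain : ∀ t, Integrable (fun ω => Real.cosh (lam * Xs t ω)) P ∧
      ∫ ω, Real.cosh (lam * Xs t ω) ∂P ≤ B := by
    intro t
    induction t with
    | zero =>
      have hfun : (fun ω => Real.cosh (lam * Xs 0 ω)) = fun _ => Real.cosh (lam * x0) := by
        funext ω; rw [hXs0 ω]
      rw [hfun]
      refine ⟨integrable_const _, ?_⟩
      rw [integral_const]
      simp only [probReal_univ, one_smul]
      exact le_max_left _ _
    | succ t ih =>
      obtain ⟨ih_int, ih_bd⟩ := ih
      have hdom_int : Integrable (fun ω =>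
          2*(Real.exp (-(lam*δ)) * Real.cosh (lam * Xs t ω) + Real.exp (lam*δ))) P :=
        ((ih_int.const_mul _).add (integrable_const _)).const_mul 2
      have hGmeas : ∀ s : ℝ, Measurable (fun ω => Real.exp (s * F (Xs t ω))) :=
        fun s => measurable_exp.comp ((hFmeas.comp (measXs t)).const_mul s)
      have hGbd : ∀ s : ℝ, s = lam ∨ s = -lam → ∀ ω,
          Real.exp (s * F (Xs t ω))
            ≤ 2*(Real.exp (-(lam*δ)) * Real.cosh (lam * Xs t ω) + Real.exp (lam*δ)) := by
        intro s hs ω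
        have hcosh2 : 2 * Real.cosh (lam * F (Xs t ω))
            = Real.exp (lam * F (Xs t ω)) + Real.exp (-(lam * F (Xs t ω))) := by
          rw [Real.cosh_eq]; ring
        have h1 : Real.exp (s * F (Xs t ω)) ≤ 2 * Real.cosh (lam * F (Xs t ω)) := by
          rcases hs with h | h <;> subst h
          · rw [hcosh2]; linarith [Real.exp_pos (-(lam * F (Xs t ω)))]
          · rw [hcosh2, show -lam * F (Xs t ω) = -(lam * F (Xs t ω)) by ring]
            linarith [Real.exp_pos (lam * F (Xs t ω))]
        nlinarith [hcontr (Xs t ω)]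
      have hGint : ∀ s : ℝ, s = lam ∨ s = -lam →
          Integrable (fun ω => Real.exp (s * F (Xs t ω))) P := by
        intro s hs
        refine hdom_int.mono' (hGmeas s).aestronglyMeasurable (ae_of_all _ fun ω => ?_)
        rw [Real.norm_eq_abs, abs_of_pos (Real.exp_pos _)]
        exact hGbd s hs ω
      have hprodIndep : ∀ s : ℝ, IndepFun (fun ω => Real.exp (s * F (Xs t ω)))
          (fun ω => Real.exp (s*(b*V t ω + W t ω))) P := by
        intro s
        have hφ : Measurable (fun x : ℝ => Real.exp (s * F x)) :=
          measurable_exp.comp (hFmeas.const_mul s)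
        have hψ : Measurable (fun p : ℝ×ℝ => Real.exp (s*(b*p.2 + p.1))) :=
          measurable_exp.comp (((measurable_snd.const_mul b).add measurable_fst).const_mul s)
        exact (hIndXN t).comp hφ hψ
      have key : ∀ s : ℝ, (hs : s = lam ∨ s = -lam) →
          Integrable ((fun ω => Real.exp (s * F (Xs t ω)))
            * (fun ω => Real.exp (s*(b*V t ω + W t ω)))) P ∧
          ∫ ω, Real.exp (s * F (Xs t ω)) * Real.exp (s*(b*V t ω + W t ω)) ∂P
            ≤ M * ∫ ω, Real.exp (s * F (Xs t ω)) ∂P := by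
        intro s hs
        obtain ⟨hEi, hEv⟩ := hE t s hs
        refine ⟨(hprodIndep s).integrable_mul (hGint s hs) hEi, ?_⟩
        have hmul := (hprodIndep s).integral_mul_eq_mul_integral (hGint s hs).aestronglyMeasurable hEi.aestronglyMeasurable
        have heq : (fun ω => Real.exp (s * F (Xs t ω)) * Real.exp (s*(b*V t ω + W t ω)))
            = (fun ω => Real.exp (s * F (Xs t ω)))
              * (fun ω => Real.exp (s*(b*V t ω + W t ω))) := rfl
        rw [heq, hmul]
        have hGnn : 0 ≤ ∫ ω, Real.exp (s * F (Xs t ω)) ∂P :=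
          integral_nonneg fun ω => (Real.exp_pos _).le
        calc _ ≤ (∫ ω, Real.exp (s * F (Xs t ω)) ∂P) * M :=
              mul_le_mul_of_nonneg_left hEv hGnn
          _ = _ := mul_comm _ _
      obtain ⟨hint1, hval1⟩ := key lam (Or.inl rfl)
      obtain ⟨hint2, hval2⟩ := key (-lam) (Or.inr rfl)
      have hsum : (fun ω => Real.cosh (lam * Xs (t+1) ω))
          = fun ω => (Real.exp (lam * F (Xs t ω)) * Real.exp (lam*(b*V t ω + W t ω))
            + Real.exp ((-lam) * F (Xs t ω)) * Real.exp ((-lam)*(b*V t ω + W t ω))) / 2 := by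
        funext ω
        rw [hstep t ω, Real.cosh_eq, ← Real.exp_add, ← Real.exp_add]
        congr 1
        congr 1 <;> rw [Real.exp_eq_exp] <;> ring
      have hint1' : Integrable (fun ω => Real.exp (lam * F (Xs t ω))
          * Real.exp (lam*(b*V t ω + W t ω))) P := hint1
      have hint2' : Integrable (fun ω => Real.exp ((-lam) * F (Xs t ω))
          * Real.exp ((-lam)*(b*V t ω + W t ω))) P := hint2
      have hint3 : Integrable (fun ω => Real.cosh (lam * Xs (t+1) ω)) P := by
        rw [hsum]; exact (hint1'.add hint2').div_const 2
      refine ⟨hint3, ?_⟩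
      have hcoshF_eq : (fun ω => Real.cosh (lam * F (Xs t ω)))
          = fun ω => (Real.exp (lam * F (Xs t ω)) + Real.exp ((-lam) * F (Xs t ω))) / 2 := by
        funext ω; rw [Real.cosh_eq]
        congr 1
        congr 1
        rw [Real.exp_eq_exp]; ring
      have hcoshF_int : Integrable (fun ω => Real.cosh (lam * F (Xs t ω))) P := by
        rw [hcoshF_eq]
        exact ((hGint lam (Or.inl rfl)).add (hGint (-lam) (Or.inr rfl))).div_const 2
      have hGsplit : ∫ ω, Real.cosh (lam * F (Xs t ω)) ∂P
          = ((∫ ω, Real.exp (lam * F (Xs t ω)) ∂P)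
            + (∫ ω, Real.exp ((-lam) * F (Xs t ω)) ∂P))/2 := by
        rw [← integral_add (hGint lam (Or.inl rfl)) (hGint (-lam) (Or.inr rfl))]
        rw [hcoshF_eq, integral_div]
      have hcoshF_bd : ∫ ω, Real.cosh (lam * F (Xs t ω)) ∂P
          ≤ Real.exp (-(lam*δ)) * B + Real.exp (lam*δ) := by
        have h1 : ∫ ω, Real.cosh (lam * F (Xs t ω)) ∂P
            ≤ ∫ ω, (Real.exp (-(lam*δ)) * Real.cosh (lam * Xs t ω) + Real.exp (lam*δ)) ∂P :=
          integral_mono hcoshF_int ((ih_int.const_mul _).add (integrable_const _))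
            (fun ω => hcontr (Xs t ω))
        have hR : ∫ ω, (Real.exp (-(lam*δ)) * Real.cosh (lam * Xs t ω) + Real.exp (lam*δ)) ∂P
            = Real.exp (-(lam*δ)) * (∫ ω, Real.cosh (lam * Xs t ω) ∂P) + Real.exp (lam*δ) := by
          rw [integral_add (ih_int.const_mul _) (integrable_const _),
            integral_const_mul, integral_const]
          simp only [probReal_univ, one_smul]
        rw [hR] at h1
        have := mul_le_mul_of_nonneg_left ih_bd (Real.exp_pos (-(lam*δ))).le
        linarith
      have hfin : ∫ ω, Real.cosh (lam * Xs (t+1) ω) ∂P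
          ≤ M * ∫ ω, Real.cosh (lam * F (Xs t ω)) ∂P := by
        set g1 := ∫ ω, Real.exp (lam * F (Xs t ω)) ∂P with hg1
        set g2 := ∫ ω, Real.exp ((-lam) * F (Xs t ω)) ∂P with hg2
        rw [hsum, integral_div, integral_add hint1' hint2', hGsplit]
        have e : M * ((g1+g2)/2) = (M*g1 + M*g2)/2 := by ring
        rw [e]
        have h1 := hval1
        have h2 := hval2
        linarith
      have hlast : M * ∫ ω, Real.cosh (lam * F (Xs t ω)) ∂P ≤ ρ * B + c := by
        calc M * ∫ ω, Real.cosh (lam * F (Xs t ω)) ∂P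
            ≤ M * (Real.exp (-(lam*δ)) * B + Real.exp (lam*δ)) :=
              mul_le_mul_of_nonneg_left hcoshF_bd hM0.le
          _ = ρ * B + c := by rw [hρdef, hcdef]; ring
      have hBc : c ≤ (1-ρ)*B := by
        have h1 : c/(1-ρ) ≤ B := le_max_right _ _
        have h2 : (0:ℝ) < 1 - ρ := by linarith
        calc c = (c/(1-ρ))*(1-ρ) := by field_simp
          _ ≤ B*(1-ρ) := mul_le_mul_of_nonneg_right h1 h2.le
          _ = (1-ρ)*B := mul_comm _ _
      calc ∫ ω, Real.cosh (lam * Xs (t+1) ω) ∂P ≤ M * ∫ ω, Real.cosh (lam * F (Xs t ω)) ∂P := hfin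
        _ ≤ ρ * B + c := hlast
        _ ≤ B := by nlinarith
  -- conclusion
  refine ⟨(2/lam^2) * B, by positivity, fun t => ?_⟩
  obtain ⟨hint, hbd⟩ := hmain t
  have hptw : ∀ ω, Xs t ω ^ 2 ≤ (2/lam^2) * Real.cosh (lam * Xs t ω) := by
    intro ω
    have h1 := msb_cosh_lower (lam * Xs t ω)
    have h2 : (lam * Xs t ω)^2 = lam^2 * Xs t ω ^2 := by ring
    rw [h2] at h1
    have hl2 : (0:ℝ) < lam^2 := by positivity
    rw [div_mul_eq_mul_div, le_div_iff₀ hl2]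
    nlinarith
  calc ∫⁻ ω, ENNReal.ofReal (Xs t ω ^ 2) ∂P
      ≤ ∫⁻ ω, ENNReal.ofReal ((2/lam^2) * Real.cosh (lam * Xs t ω)) ∂P :=
        lintegral_mono fun ω => ENNReal.ofReal_le_ofReal (hptw ω)
    _ = ENNReal.ofReal (∫ ω, (2/lam^2) * Real.cosh (lam * Xs t ω) ∂P) :=
        (ofReal_integral_eq_lintegral_ofReal (hint.const_mul _)
          (ae_of_all _ fun ω => by positivity)).symm
    _ ≤ ENNReal.ofReal ((2/lam^2) * B) := by
        apply ENNReal.ofReal_le_ofReal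
        rw [integral_const_mul]
        exact mul_le_mul_of_nonneg_left hbd (by positivity)


end
end

section
/- Under assumptions A1–A2 with x₀ ∈ ℝ and a ∈ {−1,1}, let (X_t)_{t∈ℕ₀} be the closed-loop states under the AICMSS control strategy and (X*_t)_{t∈ℕ₀} the reference system states (driven by the same noise sequences (V_t), (W_t)). Then for all d ∈ (0, min(1, |b|)), all k ∈ ℕ, and all t ∈ ℕ₀, on the event {T_d = k} it holds that |X_t − X*_t| ≤ max( (k+1)·2|b|D, 2·((|b|+d)/(1−d) + 3|b|)·D ). -/
open MeasureTheory ProbabilityTheory Real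
open scoped ENNReal NNReal RealInnerProductSpace Matrix

noncomputable section

/-- `T_d`: the first time after which the parameter estimate remains within distance `d`
of the true parameter. -/
def AICMSS.Td {Ω : Type*} [MeasurableSpace Ω] {P : MeasureTheory.Measure Ω}
    (S : AICMSS Ω P) (d : ℝ) (ω : Ω) : ℕ :=
  sInf {t : ℕ | 1 ≤ t ∧ ∀ i : ℕ, t ≤ i → ‖S.θhat i ω - S.θstar‖ ≤ d}


/-! ### Auxiliary lemmas -/

lemma sat_of_abs_le {r x : ℝ} (h : |x| ≤ r) : sat r x = x := if_pos h

lemma sat_of_lt {r x : ℝ} (h : r < |x|) : sat r x = r * x / |x| := if_neg (not_le.mpr h)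

lemma sat_abs_le {r : ℝ} (hr : 0 ≤ r) (x : ℝ) : |sat r x| ≤ r := by
  unfold sat
  split_ifs with h
  · exact h
  · push_neg at h
    have hx : |x| ≠ 0 := by intro h0; rw [h0] at h; linarith
    rw [abs_div, abs_mul, abs_abs, abs_of_nonneg hr, mul_div_assoc,
      div_self hx, mul_one]

lemma abs_add_opp {e u : ℝ} (h : e * u ≤ 0) (h2 : |u| ≤ |e|) : |e + u| = |e| - |u| := by
  rcases le_total 0 e with he | he <;> rcases le_total 0 u with hu | hu
  · have hu0 : u = 0 := by nlinarith [abs_of_nonneg he, abs_of_nonneg hu]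
    simp [hu0]
  · rw [abs_of_nonneg he, abs_of_nonpos hu] at *
    rw [abs_of_nonneg (by linarith)]; ring
  · rw [abs_of_nonpos he, abs_of_nonneg hu] at *
    rw [abs_of_nonpos (by linarith)]; ring
  · have hu0 : u = 0 := by nlinarith [abs_of_nonpos he, abs_of_nonpos hu]
    simp [hu0]

lemma bs2_eq {a b D Y : ℝ} (ha : |a| = 1) (hD : 0 < D) (hb : b ≠ 0)
    (hY : |b| * D < |Y|) : b * sat D (-(a / b) * Y) = -(a * (D * |b|)) * (Y / |Y|) := by
  have hb0 : (0:ℝ) < |b| := abs_pos.mpr hb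
  have hYpos : (0:ℝ) < |Y| := lt_of_le_of_lt (by positivity) hY
  have hz : |(-(a / b)) * Y| = |Y| / |b| := by
    rw [abs_mul, abs_neg, abs_div, ha]; ring
  have hsatz : D < |(-(a / b)) * Y| := by
    rw [hz, lt_div_iff₀ hb0]; nlinarith
  rw [sat_of_lt hsatz, hz]
  field_simp

lemma bs2_eq' {a b D Y : ℝ} (ha : |a| = 1) (hb : b ≠ 0)
    (hY : |Y| ≤ |b| * D) : b * sat D (-(a / b) * Y) = -(a * Y) := by
  have hb0 : (0:ℝ) < |b| := abs_pos.mpr hb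
  have hz : |(-(a / b)) * Y| ≤ D := by
    rw [abs_mul, abs_neg, abs_div, ha, one_div, inv_mul_le_iff₀ hb0]
    nlinarith
  rw [sat_of_abs_le hz]
  field_simp

lemma div_abs_of_neg {x : ℝ} (h : x < 0) : x / |x| = -1 := by
  rw [abs_of_neg h, div_neg, div_self (ne_of_lt h)]

lemma div_abs_of_pos {x : ℝ} (h : 0 < x) : x / |x| = 1 := by
  rw [abs_of_pos h, div_self (ne_of_gt h)]

lemma coord_abs_le_norm (v : E2) (j : Fin 2) : |WithLp.equiv 2 (Fin 2 → ℝ) v j| ≤ ‖v‖ := by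
  rw [EuclideanSpace.norm_eq]
  have h1 : |WithLp.equiv 2 (Fin 2 → ℝ) v j| = Real.sqrt (‖v j‖ ^ 2) := by
    rw [Real.sqrt_sq_eq_abs, abs_norm, Real.norm_eq_abs]; rfl
  rw [h1]
  apply Real.sqrt_le_sqrt
  exact Finset.single_le_sum (f := fun i => ‖v i‖ ^ 2) (fun i _ => by positivity)
    (Finset.mem_univ j)

set_option maxHeartbeats 1000000 in
/-- Key one-step estimate. -/
lemma step_key (a b D d G X Y ah bh : ℝ) (ha : |a| = 1) (hD : 0 < D)
    (hd0 : 0 < d) (hd1 : d < 1) (hdb : d < |b|)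
    (hah : |ah - a| ≤ d) (hbh : |bh - b| ≤ d) (hGdef : G = -(ah / bh)) :
    |a * (X - Y) + b * (sat D (G * X) - sat D (-(a / b) * Y))|
      ≤ max |X - Y| (2 * ((|b| + d) / (1 - d) + 3 * |b|) * D) := by
  have hb0 : (0:ℝ) < |b| := lt_trans hd0 hdb
  have hbne : b ≠ 0 := abs_pos.mp hb0
  have hd1' : (0:ℝ) < 1 - d := by linarith
  have hR : (0:ℝ) < D * (|b| + d) / (1 - d) := by positivity
  set R : ℝ := D * (|b| + d) / (1 - d) with hRdef
  have hBB : 2 * ((|b| + d) / (1 - d) + 3 * |b|) * D = 2 * R + 6 * (|b| * D) := by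
    rw [hRdef]; ring
  -- easy bound: the whole expression is at most |X-Y| + 2|b|D
  have htriv : |a * (X - Y) + b * (sat D (G * X) - sat D (-(a / b) * Y))|
      ≤ |X - Y| + 2 * (|b| * D) := by
    have h1 : |sat D (G * X) - sat D (-(a / b) * Y)| ≤ 2 * D := by
      have := sat_abs_le hD.le (G * X)
      have := sat_abs_le hD.le (-(a / b) * Y)
      have := abs_sub (sat D (G * X)) (sat D (-(a / b) * Y))
      linarith
    calc |a * (X - Y) + b * (sat D (G * X) - sat D (-(a / b) * Y))|
        ≤ |a * (X - Y)| + |b * (sat D (G * X) - sat D (-(a / b) * Y))| := abs_add_le _ _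
      _ = |X - Y| + |b| * |sat D (G * X) - sat D (-(a / b) * Y)| := by
          rw [abs_mul, abs_mul, ha, one_mul]
      _ ≤ |X - Y| + |b| * (2 * D) := by nlinarith
      _ = |X - Y| + 2 * (|b| * D) := by ring
  rcases le_or_gt |X - Y| (2 * R + 4 * (|b| * D)) with hcase | hcase
  · refine le_max_of_le_right ?_
    rw [hBB]; linarith
  -- hard case : |X - Y| > 2R + 4|b|D ; show expression ≤ |X - Y|
  refine le_max_of_le_left ?_
  set e : ℝ := X - Y with hedef
  -- sign facts about ah, bh, G
  have haa : a * a = 1 := by rcases abs_eq (by norm_num : (0:ℝ) ≤ 1) |>.mp ha with h | h <;> rw [h] <;> norm_num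
  have hA := abs_le.mp hah
  have hB := abs_le.mp hbh
  have haabs := abs_le.mp (le_of_eq ha)
  have haah : 0 < a * ah := by nlinarith
  have hbbh : 0 < b * bh := by
    rcases le_or_gt 0 b with hbp | hbn
    · rw [abs_of_nonneg hbp] at hdb; nlinarith
    · rw [abs_of_neg hbn] at hdb; nlinarith
  have hbhne : bh ≠ 0 := by intro h; rw [h] at hbbh; simp at hbbh
  have hbhu : |bh| ≤ |b| + d := by
    have := abs_sub_abs_le_abs_sub bh b; linarith [hB.2, abs_le.mp hbh]
  have hahl : 1 - d ≤ |ah| := by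
    have h1 := abs_sub_abs_le_abs_sub a ah
    rw [abs_sub_comm] at h1
    linarith [ha ▸ h1, hah]
  have hGl : (1 - d) / (|b| + d) ≤ |G| := by
    rw [hGdef, abs_neg, abs_div]
    apply div_le_div₀ (abs_nonneg ah) hahl (by positivity) hbhu
  have hGne : G ≠ 0 := by
    intro h
    rw [h, abs_zero] at hGl
    have : (0:ℝ) < (1 - d) / (|b| + d) := by positivity
    linarith
  have habG : a * b * G < 0 := by
    have h1 : a * b * G = -((a * ah) * (b * bh)) / bh ^ 2 := by
      rw [hGdef]; field_simp
    rw [h1]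
    apply div_neg_of_neg_of_pos (by nlinarith) (by positivity)
  have hbG : b * G = -(a * (|b| * |G|)) := by
    have h2 : |a * b * G| = |b| * |G| := by rw [abs_mul, abs_mul, ha, one_mul]
    have h3 : |a * b * G| = -(a * b * G) := abs_of_neg habG
    have h4 : a * b * G = -(|b| * |G|) := by linarith
    linear_combination a * h4 - (b * G) * haa
  -- case analysis on |X|
  rcases le_or_gt |X| (R + 2 * (|b| * D)) with hX | hX
  · -- X small, so Y is large and saturated
    have heX : |e| - |X| ≤ |Y| := by
      have h1 : e - X = -Y := by rw [hedef]; ring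
      calc |e| - |X| ≤ |e - X| := abs_sub_abs_le_abs_sub e X
        _ = |Y| := by rw [h1, abs_neg]
    have hY : |b| * D < |Y| := by linarith [mul_pos hb0 hD]
    have hYpos : 0 < |Y| := by linarith [mul_pos hb0 hD]
    have hXY : |X| < |Y| := by linarith
    have hbs2 := bs2_eq ha hD hbne hY
    set u : ℝ := D * |b| * (Y / |Y|) with hudef
    have hE : a * (X - Y) + b * (sat D (G * X) - sat D (-(a / b) * Y))
        = a * (e + u) + b * sat D (G * X) := by
      linear_combination (-1 : ℝ) * hbs2 - a * hudef - a * hedef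
    have heY : e * Y < 0 := by
      have h0 : e * Y = X * Y - Y * Y := by rw [hedef]; ring
      have h1 : X * Y ≤ |X| * |Y| := by rw [← abs_mul]; exact le_abs_self _
      have h2 : Y * Y = |Y| * |Y| := (abs_mul_abs_self Y).symm
      have h3 : 0 < |Y| * (|Y| - |X|) := mul_pos hYpos (by linarith)
      linarith [h0, h1, h2, h3]
    have heu : e * u ≤ 0 := by
      have h1 : e * u = (D * |b| / |Y|) * (e * Y) := by
        rw [hudef]; ring
      rw [h1]
      exact mul_nonpos_of_nonneg_of_nonpos (by positivity) heY.le
    have huabs : |u| = D * |b| := by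
      rw [hudef, abs_mul, abs_div, abs_abs, div_self (ne_of_gt hYpos), mul_one,
        abs_mul, abs_of_nonneg hD.le, abs_abs]
    have hkey : |e + u| = |e| - |u| := abs_add_opp heu (by rw [huabs]; linarith [mul_pos hb0 hD, hR])
    calc |a * (X - Y) + b * (sat D (G * X) - sat D (-(a / b) * Y))|
        = |a * (e + u) + b * sat D (G * X)| := by rw [hE]
      _ ≤ |a * (e + u)| + |b * sat D (G * X)| := abs_add_le _ _
      _ = |e + u| + |b| * |sat D (G * X)| := by rw [abs_mul, abs_mul, ha, one_mul]
      _ ≤ (|e| - D * |b|) + |b| * D := by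
          rw [hkey, huabs]
          have := mul_le_mul_of_nonneg_left (sat_abs_le hD.le (G * X)) (abs_nonneg b)
          have h7 : |b| * |sat D (G * X)| ≤ |b| * D := this
          linarith
      _ ≤ |X - Y| := by rw [← hedef]; linarith
  · -- X large : control saturated
    have hXpos : 0 < |X| := by linarith [mul_pos hb0 hD]
    have hGX : D < |G * X| := by
      have hq : (0:ℝ) < (1 - d) / (|b| + d) := by positivity
      have h1 : (1 - d) / (|b| + d) * R = D := by
        rw [hRdef]; field_simp
      have hRX : R < |X| := by linarith [mul_pos hb0 hD]
      have h2 : D < (1 - d) / (|b| + d) * |X| := by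
        have := mul_lt_mul_of_pos_left hRX hq
        linarith
      have h3 : (1 - d) / (|b| + d) * |X| ≤ |G| * |X| :=
        mul_le_mul_of_nonneg_right hGl (abs_nonneg X)
      rw [abs_mul]; linarith
    have hGXne : |G| * |X| ≠ 0 := by positivity
    have hbs1 : b * sat D (G * X) = -(a * (D * |b|)) * (X / |X|) := by
      rw [sat_of_lt hGX, abs_mul]
      have h5 : b * (D * (G * X) / (|G| * |X|)) = D * (b * G) * (X / (|G| * |X|)) := by ring
      rw [h5, hbG]
      field_simp
    rcases le_or_gt |Y| (|b| * D) with hY | hY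
    · -- Y unsaturated
      have hbs2 := bs2_eq' ha hbne hY
      set v : ℝ := -(D * |b|) * (X / |X|) with hvdef
      have hE : a * (X - Y) + b * (sat D (G * X) - sat D (-(a / b) * Y))
          = a * (X + v) := by
        linear_combination hbs1 - hbs2 - a * hvdef - (Y + v) * haa + (Y - D * |b| * (X / |X|)) * haa
      have hXv : X * v ≤ 0 := by
        have h1 : X * v = -(D * |b|) * (X * X / |X|) := by rw [hvdef]; ring
        rw [h1]
        apply mul_nonpos_of_nonpos_of_nonneg (by linarith [mul_pos hD hb0]) (div_nonneg (mul_self_nonneg X) (abs_nonneg X))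
      have hvabs : |v| = D * |b| := by
        rw [hvdef, abs_mul, abs_div, abs_abs, div_self (ne_of_gt hXpos), mul_one,
          abs_neg, abs_mul, abs_of_nonneg hD.le, abs_abs]
      have hkey : |X + v| = |X| - |v| := abs_add_opp hXv (by rw [hvabs]; linarith)
      have heXY : |X| - |Y| ≤ |e| := by
        rw [hedef]; exact abs_sub_abs_le_abs_sub X Y
      calc |a * (X - Y) + b * (sat D (G * X) - sat D (-(a / b) * Y))|
          = |a * (X + v)| := by rw [hE]
        _ = |X + v| := by rw [abs_mul, ha, one_mul]
        _ = |X| - D * |b| := by rw [hkey, hvabs]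
        _ ≤ |X - Y| := by rw [← hedef]; linarith
    · -- Y saturated as well
      have hbs2 := bs2_eq ha hD hbne hY
      have hYpos : 0 < |Y| := by linarith [mul_pos hb0 hD]
      rcases lt_trichotomy (X * Y) 0 with hXY | hXY | hXY
      · -- opposite signs
        set w : ℝ := -(2 * (D * |b|)) * (X / |X|) with hwdef
        have hsgn : Y / |Y| = -(X / |X|) := by
          rcases lt_or_ge X 0 with hx | hx
          · have hy : 0 < Y := by
              by_contra hc
              push_neg at hc
              nlinarith [hXY, hx, hc]
            rw [div_abs_of_pos hy, div_abs_of_neg hx]; norm_num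
          · have hx' : 0 < X := lt_of_le_of_ne hx (by rintro rfl; simp at hXpos)
            have hy : Y < 0 := by
              by_contra hc
              push_neg at hc
              nlinarith [hXY, hx', hc]
            rw [div_abs_of_neg hy, div_abs_of_pos hx']
        have hE : a * (X - Y) + b * (sat D (G * X) - sat D (-(a / b) * Y))
            = a * (e + w) := by
          linear_combination hbs1 - hbs2 - a * hwdef - a * hedef + (a * (D * |b|)) * hsgn
        have hew : e * w ≤ 0 := by
          have h0 : e * X = X * X - X * Y := by rw [hedef]; ring
          have heX : 0 < e * X := by
            have h2 : X * X = |X| * |X| := (abs_mul_abs_self X).symm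
            have h3 : 0 < |X| * |X| := mul_pos hXpos hXpos
            linarith
          have h1 : e * w = -(2 * (D * |b|)) * (e * X / |X|) := by rw [hwdef]; ring
          rw [h1]
          apply mul_nonpos_of_nonpos_of_nonneg (by linarith [mul_pos hD hb0]) (by positivity)
        have hwabs : |w| = 2 * (D * |b|) := by
          rw [hwdef, abs_mul, abs_div, abs_abs, div_self (ne_of_gt hXpos), mul_one,
            abs_neg, abs_mul, abs_mul, abs_of_nonneg hD.le, abs_abs]
          norm_num
        have hkey : |e + w| = |e| - |w| :=
          abs_add_opp hew (by rw [hwabs]; linarith [mul_pos hD hb0])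
        calc |a * (X - Y) + b * (sat D (G * X) - sat D (-(a / b) * Y))|
            = |a * (e + w)| := by rw [hE]
          _ = |e + w| := by rw [abs_mul, ha, one_mul]
          _ = |e| - |w| := hkey
          _ ≤ |X - Y| := by rw [← hedef]; linarith [abs_nonneg w]
      · -- X * Y = 0 impossible
        exfalso
        rcases mul_eq_zero.mp hXY with h | h
        · rw [h, abs_zero] at hXpos; exact lt_irrefl _ hXpos
        · rw [h, abs_zero] at hYpos; exact lt_irrefl _ hYpos
      · -- same signs : exact cancellation
        have hsgn : Y / |Y| = X / |X| := by
          rcases lt_or_ge X 0 with hx | hx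
          · have hy : Y < 0 := by
              by_contra hc
              push_neg at hc
              nlinarith [hXY, hx, hc]
            rw [div_abs_of_neg hy, div_abs_of_neg hx]
          · have hx' : 0 < X := lt_of_le_of_ne hx (by rintro rfl; simp at hXpos)
            have hy : 0 < Y := by
              by_contra hc
              push_neg at hc
              nlinarith [hXY, hx', hc]
            rw [div_abs_of_pos hy, div_abs_of_pos hx']
        have hE : a * (X - Y) + b * (sat D (G * X) - sat D (-(a / b) * Y))
            = a * e := by
          linear_combination hbs1 - hbs2 - a * hedef + (a * (D * |b|)) * hsgn
        rw [hE, abs_mul, ha, one_mul, hedef]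

/-- **Lemma 11: pathwise bound on the deviation from the reference system after `T_d`.** -/
theorem reference_error_bound {Ω : Type*} [MeasurableSpace Ω] (P : Measure Ω)
    [IsProbabilityMeasure P] (S : AICMSS Ω P) (ha1 : S.a = -1 ∨ S.a = 1)
    (Xs : ℕ → Ω → ℝ) (hXs0 : ∀ ω, Xs 0 ω = S.x0)
    (hXsrec : ∀ t ω, Xs (t + 1) ω =
      S.a * Xs t ω + S.b * (sat S.D (-(S.a / S.b) * Xs t ω) + S.V t ω) + S.W t ω) :
    ∀ d : ℝ, 0 < d → d < min 1 |S.b| → ∀ k : ℕ, 1 ≤ k → ∀ t : ℕ, ∀ ω : Ω,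
      S.Td d ω = k →
        |S.X t ω - Xs t ω| ≤ max (((k : ℝ) + 1) * (2 * |S.b| * S.D))
          (2 * ((|S.b| + d) / (1 - d) + 3 * |S.b|) * S.D) := by
  intro d hd0 hdlt k hk t ω hT
  have hD : 0 < S.D := sub_pos.mpr S.hCU
  have ha : |S.a| = 1 := by rcases ha1 with h | h <;> rw [h] <;> norm_num
  have hb0 : (0:ℝ) < |S.b| := abs_pos.mpr S.hb
  have hd1 : d < 1 := lt_of_lt_of_le hdlt (min_le_left _ _)
  have hdb : d < |S.b| := lt_of_lt_of_le hdlt (min_le_right _ _)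
  -- membership of k in the defining set of Td
  have hmem : 1 ≤ k ∧ ∀ i : ℕ, k ≤ i → ‖S.θhat i ω - S.θstar‖ ≤ d := by
    have hne : {t : ℕ | 1 ≤ t ∧ ∀ i : ℕ, t ≤ i → ‖S.θhat i ω - S.θstar‖ ≤ d}.Nonempty := by
      by_contra h
      rw [Set.not_nonempty_iff_eq_empty] at h
      simp only [AICMSS.Td, h, Nat.sInf_empty] at hT
      omega
    have := Nat.sInf_mem hne
    simpa only [AICMSS.Td, hT] using (hT ▸ this)
  -- componentwise parameter estimates
  have hcomp : ∀ i : ℕ, k ≤ i →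
      |WithLp.equiv 2 (Fin 2 → ℝ) (S.θhat i ω) 0 - S.a| ≤ d ∧
      |WithLp.equiv 2 (Fin 2 → ℝ) (S.θhat i ω) 1 - S.b| ≤ d := by
    intro i hi
    have hnorm := hmem.2 i hi
    have h0 := (coord_abs_le_norm (S.θhat i ω - S.θstar) 0).trans hnorm
    have h1 := (coord_abs_le_norm (S.θhat i ω - S.θstar) 1).trans hnorm
    have hsub : ∀ j : Fin 2, WithLp.equiv 2 (Fin 2 → ℝ) (S.θhat i ω - S.θstar) j
        = WithLp.equiv 2 (Fin 2 → ℝ) (S.θhat i ω) j -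
          WithLp.equiv 2 (Fin 2 → ℝ) S.θstar j := by
      intro j; simp
    have hst0 : WithLp.equiv 2 (Fin 2 → ℝ) S.θstar 0 = S.a := by
      simp [AICMSS.θstar]
    have hst1 : WithLp.equiv 2 (Fin 2 → ℝ) S.θstar 1 = S.b := by
      simp [AICMSS.θstar]
    rw [hsub 0, hst0] at h0
    rw [hsub 1, hst1] at h1
    exact ⟨h0, h1⟩
  -- error recurrence
  have hrec : ∀ s : ℕ, S.X (s+1) ω - Xs (s+1) ω =
      S.a * (S.X s ω - Xs s ω) +
        S.b * (sat S.D (S.G s ω * S.X s ω) - sat S.D (-(S.a / S.b) * Xs s ω)) := by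
    intro s
    rw [S.hXrec, S.hU, hXsrec]
    simp only [AICMSS.D]
    ring
  -- crude linear-growth bound
  have hcrude : ∀ s : ℕ, |S.X s ω - Xs s ω| ≤ (s : ℝ) * (2 * |S.b| * S.D) := by
    intro s
    induction s with
    | zero => simp [S.hX0, hXs0]
    | succ n ih =>
      have h1 : |sat S.D (S.G n ω * S.X n ω)| ≤ S.D := sat_abs_le hD.le _
      have h2 : |sat S.D (-(S.a / S.b) * Xs n ω)| ≤ S.D := sat_abs_le hD.le _
      have h3 : |sat S.D (S.G n ω * S.X n ω) - sat S.D (-(S.a / S.b) * Xs n ω)| ≤ 2 * S.D :=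
        (abs_sub _ _).trans (by linarith)
      have h4 : |S.X (n+1) ω - Xs (n+1) ω| ≤ |S.X n ω - Xs n ω| + 2 * (|S.b| * S.D) := by
        rw [hrec n]
        calc |S.a * (S.X n ω - Xs n ω) +
              S.b * (sat S.D (S.G n ω * S.X n ω) - sat S.D (-(S.a / S.b) * Xs n ω))|
            ≤ |S.a * (S.X n ω - Xs n ω)| +
              |S.b * (sat S.D (S.G n ω * S.X n ω) - sat S.D (-(S.a / S.b) * Xs n ω))| :=
              abs_add_le _ _
          _ = |S.X n ω - Xs n ω| +
              |S.b| * |sat S.D (S.G n ω * S.X n ω) - sat S.D (-(S.a / S.b) * Xs n ω)| := by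
              rw [abs_mul, abs_mul, ha, one_mul]
          _ ≤ |S.X n ω - Xs n ω| + 2 * (|S.b| * S.D) := by nlinarith
      push_cast
      nlinarith
  set B : ℝ := 2 * ((|S.b| + d) / (1 - d) + 3 * |S.b|) * S.D with hBdef
  -- after time k+1, the error does not increase beyond B
  have hmain : ∀ s : ℕ, |S.X (k+1+s) ω - Xs (k+1+s) ω|
      ≤ max (|S.X (k+1) ω - Xs (k+1) ω|) B := by
    intro s
    induction s with
    | zero => exact le_max_left _ _
    | succ n ih =>
      have h2τ : 2 ≤ k + 1 + n := by omega
      have hGτ := S.hG (k+1+n) ω h2τ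
      have hki : k ≤ k + 1 + n - 1 := by omega
      obtain ⟨hA, hB'⟩ := hcomp (k+1+n-1) hki
      have hstep := step_key S.a S.b S.D d (S.G (k+1+n) ω) (S.X (k+1+n) ω) (Xs (k+1+n) ω)
        (WithLp.equiv 2 (Fin 2 → ℝ) (S.θhat (k+1+n-1) ω) 0)
        (WithLp.equiv 2 (Fin 2 → ℝ) (S.θhat (k+1+n-1) ω) 1)
        ha hD hd0 hd1 hdb hA hB' hGτ
      have heq : k + 1 + (n + 1) = (k + 1 + n) + 1 := rfl
      rw [heq, hrec (k+1+n)]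
      exact hstep.trans (max_le ih (le_max_right _ _))
  -- conclude
  rcases le_or_gt t (k+1) with hcase | hcase
  · refine le_max_of_le_left ?_
    refine (hcrude t).trans ?_
    have h1 : (t : ℝ) ≤ (k : ℝ) + 1 := by exact_mod_cast hcase
    nlinarith [mul_pos hb0 hD]
  · have ht : k + 1 + (t - (k+1)) = t := by omega
    have := hmain (t - (k+1))
    rw [ht] at this
    refine this.trans (max_le ?_ (le_max_right _ _))
    refine le_max_of_le_left ?_
    refine (hcrude (k+1)).trans ?_
    push_cast
    exact le_refl _


end
end

section
/- Under assumptions A1–A2 and x₀ ∈ ℝ, let (F_t)_{t∈ℕ₀} be the natural filtration of the state-input data (Z_t)_{t∈ℕ₀} of the closed-loop system under the AICMSS control strategy, and for ζ = (ζ₁, ζ₂) ∈ ℝ² define B_{t+1}(ζ) := 𝔼[ ζ₁X_{t+1} + ζ₂·σ_D(G_{t+1}X_{t+1}) | F_t ] + ζ₂V_{t+1}. Then for all ζ ∈ ℝ² and all t ∈ ℕ₀, 𝔼[ |B_{t+1}(ζ)| | F_t ] ≥ |ζ₂|·C/2 almost surely. -/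
open MeasureTheory ProbabilityTheory Real
open scoped ENNReal NNReal RealInnerProductSpace Matrix

noncomputable section

namespace Aux

theorem key_identity (A : Matrix (Fin 2) (Fin 2) ℝ) (hdet : A.det = 0) :
    A * Aᵀ * A = (Matrix.trace (Aᵀ * A)) • A := by
  rw [Matrix.det_fin_two] at hdet
  have htr : Matrix.trace (Aᵀ * A) = A 0 0 ^ 2 + A 0 1 ^ 2 + A 1 0 ^ 2 + A 1 1 ^ 2 := by
    simp [Matrix.trace_fin_two, Matrix.mul_apply, Fin.sum_univ_two, Matrix.transpose_apply]
    ring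
  rw [htr]
  ext i j
  fin_cases i <;> fin_cases j <;>
    simp [Matrix.mul_apply, Fin.sum_univ_two, Matrix.transpose_apply, Matrix.smul_apply,
      smul_eq_mul]
  · linear_combination (-(A 1 1)) * hdet
  · linear_combination (A 1 0) * hdet
  · linear_combination (A 0 1) * hdet
  · linear_combination (-(A 0 0)) * hdet

def Penrose {m n : ℕ} (A : Matrix (Fin m) (Fin n) ℝ) (B : Matrix (Fin n) (Fin m) ℝ) : Prop :=
  A * B * A = A ∧ B * A * B = B ∧ (A * B)ᵀ = A * B ∧ (B * A)ᵀ = B * A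

noncomputable def mpf (A : Matrix (Fin 2) (Fin 2) ℝ) : Matrix (Fin 2) (Fin 2) ℝ :=
  if A.det = 0 then
    (if A = 0 then 0 else (Matrix.trace (Aᵀ * A))⁻¹ • Aᵀ)
  else A.det⁻¹ • A.adjugate

theorem penrose_mpf (A : Matrix (Fin 2) (Fin 2) ℝ) : Penrose A (mpf A) := by
  rw [mpf]
  by_cases hdet : A.det = 0
  · rw [if_pos hdet]
    by_cases hA : A = 0
    · rw [if_pos hA]
      subst hA
      refine ⟨by simp, by simp, by simp, by simp⟩
    · rw [if_neg hA]
      set c := Matrix.trace (Aᵀ * A) with hc_def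
      have hc : c ≠ 0 := by
        rw [hc_def]
        have htr : Matrix.trace (Aᵀ * A) =
            A 0 0 ^ 2 + A 0 1 ^ 2 + A 1 0 ^ 2 + A 1 1 ^ 2 := by
          simp [Matrix.trace_fin_two, Matrix.mul_apply, Fin.sum_univ_two,
            Matrix.transpose_apply]
          ring
        rw [htr]
        intro h0
        apply hA
        ext i j
        have h00 : A 0 0 = 0 := by nlinarith [sq_nonneg (A 0 0), sq_nonneg (A 0 1), sq_nonneg (A 1 0), sq_nonneg (A 1 1)]
        have h01 : A 0 1 = 0 := by nlinarith [sq_nonneg (A 0 0), sq_nonneg (A 0 1), sq_nonneg (A 1 0), sq_nonneg (A 1 1)]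
        have h10 : A 1 0 = 0 := by nlinarith [sq_nonneg (A 0 0), sq_nonneg (A 0 1), sq_nonneg (A 1 0), sq_nonneg (A 1 1)]
        have h11 : A 1 1 = 0 := by nlinarith [sq_nonneg (A 0 0), sq_nonneg (A 0 1), sq_nonneg (A 1 0), sq_nonneg (A 1 1)]
        fin_cases i <;> fin_cases j <;> simpa
      have hkey := key_identity A hdet
      have hkeyT : Aᵀ * A * Aᵀ = c • Aᵀ := by
        have := congrArg Matrix.transpose hkey
        rw [Matrix.transpose_smul] at this
        rw [Matrix.transpose_mul, Matrix.transpose_mul, Matrix.transpose_transpose] at this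
        rw [← Matrix.mul_assoc] at this
        exact this
      refine ⟨?_, ?_, ?_, ?_⟩
      · rw [Matrix.mul_smul, Matrix.smul_mul, hkey, ← hc_def, smul_smul,
          inv_mul_cancel₀ hc, one_smul]
      · rw [Matrix.smul_mul, Matrix.smul_mul, Matrix.mul_smul, hkeyT, smul_smul, smul_smul,
          mul_assoc, inv_mul_cancel₀ hc, mul_one]
      · rw [Matrix.mul_smul, Matrix.transpose_smul, Matrix.transpose_mul,
          Matrix.transpose_transpose]
      · rw [Matrix.smul_mul, Matrix.transpose_smul, Matrix.transpose_mul,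
          Matrix.transpose_transpose]
  · rw [if_neg hdet]
    have h1 : A.det⁻¹ • A.adjugate = A⁻¹ := by
      rw [Matrix.inv_def, Ring.inverse_eq_inv]
    rw [h1]
    have hu : IsUnit A.det := isUnit_iff_ne_zero.2 hdet
    have hAi : A * A⁻¹ = 1 := Matrix.mul_nonsing_inv A hu
    have hiA : A⁻¹ * A = 1 := Matrix.nonsing_inv_mul A hu
    refine ⟨by rw [hAi, Matrix.one_mul], by rw [Matrix.mul_assoc, hAi, Matrix.mul_one],
      by rw [hAi, Matrix.transpose_one], by rw [hiA, Matrix.transpose_one]⟩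

theorem pinv_eq_mpf (A : Matrix (Fin 2) (Fin 2) ℝ) : pinv A = mpf A := by
  have h : ∃ B, A * B * A = A ∧ B * A * B = B ∧ (A * B)ᵀ = A * B ∧ (B * A)ᵀ = B * A :=
    ⟨mpf A, penrose_mpf A⟩
  rw [pinv, dif_pos h]
  obtain ⟨h1, h2, h3, h4⟩ := h.choose_spec
  obtain ⟨h1', h2', h3', h4'⟩ := penrose_mpf A
  -- uniqueness
  set B := h.choose
  set B' := mpf A
  have hAB : A * B = A * B' := by
    calc A * B = (A * B)ᵀ := h3.symm
    _ = Bᵀ * Aᵀ := Matrix.transpose_mul A B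
    _ = Bᵀ * (A * B' * A)ᵀ := by rw [h1']
    _ = Bᵀ * (Aᵀ * (A * B')ᵀ) := by rw [Matrix.transpose_mul (A * B') A]
    _ = (Bᵀ * Aᵀ) * (A * B')ᵀ := by rw [Matrix.mul_assoc]
    _ = (A * B)ᵀ * (A * B') := by rw [Matrix.transpose_mul A B, h3']
    _ = (A * B) * (A * B') := by rw [h3]
    _ = (A * B * A) * B' := by rw [← Matrix.mul_assoc]
    _ = A * B' := by rw [h1]
  have hBA : B * A = B' * A := by
    calc B * A = (B * A)ᵀ := h4.symm
    _ = Aᵀ * Bᵀ := Matrix.transpose_mul B A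
    _ = (A * (B' * A))ᵀ * Bᵀ := by rw [← Matrix.mul_assoc, h1']
    _ = ((B' * A)ᵀ * Aᵀ) * Bᵀ := by rw [Matrix.transpose_mul A (B' * A)]
    _ = (B' * A) * (Aᵀ * Bᵀ) := by rw [h4', Matrix.mul_assoc]
    _ = (B' * A) * (B * A)ᵀ := by rw [Matrix.transpose_mul B A]
    _ = (B' * A) * (B * A) := by rw [h4]
    _ = B' * (A * B * A) := by rw [Matrix.mul_assoc, Matrix.mul_assoc]
    _ = B' * A := by rw [h1]
  calc B = B * A * B := h2.symm
  _ = B * (A * B') := by rw [Matrix.mul_assoc, hAB]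
  _ = B * A * B' := by rw [Matrix.mul_assoc]
  _ = B' * A * B' := by rw [hBA]
  _ = B' := h2'

theorem me (i j : Fin 2) : Measurable fun A : Fin 2 → Fin 2 → ℝ => A i j :=
  (measurable_pi_apply i).eval

theorem measurable_det2 : Measurable fun A : Fin 2 → Fin 2 → ℝ => (Matrix.of A).det := by
  simp only [Matrix.det_fin_two, Matrix.of_apply]
  exact ((me 0 0).mul (me 1 1)).sub ((me 0 1).mul (me 1 0))

theorem measurable_pinv_entry (j l : Fin 2) :
    Measurable fun A : Fin 2 → Fin 2 → ℝ => pinv (Matrix.of A) j l := by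
  have heq : (fun A : Fin 2 → Fin 2 → ℝ => pinv (Matrix.of A) j l) =
      fun A => mpf (Matrix.of A) j l := by
    funext A; rw [pinv_eq_mpf]
  rw [heq]
  have hs1 : MeasurableSet {A : Fin 2 → Fin 2 → ℝ | (Matrix.of A).det = 0} :=
    measurable_det2 (measurableSet_singleton 0)
  have hs2 : MeasurableSet {A : Fin 2 → Fin 2 → ℝ | Matrix.of A = 0} := by
    have : {A : Fin 2 → Fin 2 → ℝ | Matrix.of A = 0} =
        {A : Fin 2 → Fin 2 → ℝ | A = Matrix.of.symm 0} := by
      ext A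
      simp only [Set.mem_setOf_eq, Equiv.apply_eq_iff_eq_symm_apply]
    rw [this]
    exact measurableSet_eq
  have htrace : Measurable fun A : Fin 2 → Fin 2 → ℝ =>
      Matrix.trace ((Matrix.of A)ᵀ * Matrix.of A) := by
    have : (fun A : Fin 2 → Fin 2 → ℝ => Matrix.trace ((Matrix.of A)ᵀ * Matrix.of A)) =
        fun A => A 0 0 ^ 2 + A 0 1 ^ 2 + A 1 0 ^ 2 + A 1 1 ^ 2 := by
      funext A
      simp [Matrix.trace_fin_two, Matrix.mul_apply, Fin.sum_univ_two, Matrix.transpose_apply]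
      ring
    rw [this]
    exact ((((me 0 0).pow measurable_const).add ((me 0 1).pow measurable_const)).add
      ((me 1 0).pow measurable_const)).add ((me 1 1).pow measurable_const)
  have hmpf : (fun A : Fin 2 → Fin 2 → ℝ => mpf (Matrix.of A) j l) =
      fun A : Fin 2 → Fin 2 → ℝ =>
        if (Matrix.of A).det = 0 then
          (if Matrix.of A = 0 then 0 else (Matrix.trace ((Matrix.of A)ᵀ * Matrix.of A))⁻¹ * A l j)
        else (Matrix.of A).det⁻¹ * (Matrix.of A).adjugate j l := by
    funext A
    rw [mpf]
    by_cases h1 : (Matrix.of A).det = 0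
    · rw [if_pos h1, if_pos h1]
      by_cases h2 : Matrix.of A = 0
      · rw [if_pos h2, if_pos h2]; rfl
      · rw [if_neg h2, if_neg h2]; rfl
    · rw [if_neg h1, if_neg h1]; rfl
  rw [hmpf]
  refine Measurable.ite hs1 (Measurable.ite hs2 measurable_const (htrace.inv.mul (me l j))) ?_
  refine measurable_det2.inv.mul ?_
  have : (fun A : Fin 2 → Fin 2 → ℝ => (Matrix.of A).adjugate j l) =
      fun A : Fin 2 → Fin 2 → ℝ =>
        (Matrix.of ![![A 1 1, -(A 0 1)], ![-(A 1 0), A 0 0]]) j l := by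
    funext A
    rw [Matrix.adjugate_fin_two]
    rfl
  rw [this]
  fin_cases j <;> fin_cases l <;> simp <;>
    first
    | exact me 1 1
    | exact (me 0 1).neg
    | exact (me 1 0).neg
    | exact me 0 1
    | exact me 1 0
    | exact me 0 0


theorem mpl {Ω : Type*} {δ : Type*} {pp : δ → Type*} {m : MeasurableSpace Ω}
    [∀ a, MeasurableSpace (pp a)] (f : Ω → ∀ a, pp a)
    (hf : ∀ a, Measurable[m] fun c => f c a) : Measurable[m] f := by
  letI := m; exact measurable_pi_lambda f hf

theorem msum {Ω : Type*} {m : MeasurableSpace Ω} {ι : Type*} (s : Finset ι) (f : ι → Ω → ℝ)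
    (hf : ∀ i ∈ s, Measurable[m] (f i)) :
    Measurable[m] (fun ω => ∑ i ∈ s, f i ω) := by
  letI := m; exact Finset.measurable_sum s hf

theorem mcomp {Ω : Type*} {m : MeasurableSpace Ω} {β γ : Type*} [MeasurableSpace β]
    [MeasurableSpace γ] {f : Ω → β} {g : β → γ} (hg : Measurable g) (hf : Measurable[m] f) :
    Measurable[m] (fun ω => g (f ω)) := by
  letI := m; exact hg.comp hf

theorem measurable_sat (r : ℝ) : Measurable (sat r) := by
  unfold sat
  refine Measurable.ite (measurableSet_le measurable_abs measurable_const) measurable_id ?_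
  exact (measurable_const.mul measurable_id).div measurable_abs

end Aux

namespace AICMSS

variable {Ω : Type*} [MeasurableSpace Ω] {P : Measure Ω}

/-- index set of noise variables up to time `t` -/
def St (t : ℕ) : Set (ℕ ⊕ ℕ) := fun i => Sum.elim (fun s => s ≤ t) (fun s => s ≤ t) i

/-- σ-algebra generated by `W_0, …, W_t, V_0, …, V_t` -/
def mWV (S : AICMSS Ω P) (t : ℕ) : MeasurableSpace Ω :=
  ⨆ i ∈ St t, MeasurableSpace.comap (Sum.elim S.W S.V i) inferInstance

theorem measurable_W_mWV (S : AICMSS Ω P) {t s : ℕ} (hs : s ≤ t) :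
    Measurable[S.mWV t] (S.W s) := by
  have h0 : Measurable[MeasurableSpace.comap (Sum.elim S.W S.V (Sum.inl s)) inferInstance]
      (Sum.elim S.W S.V (Sum.inl s)) := Measurable.of_comap_le le_rfl
  refine h0.mono ?_ le_rfl
  exact le_biSup
    (fun i => MeasurableSpace.comap (Sum.elim S.W S.V i) (inferInstance : MeasurableSpace ℝ))
    (by exact hs : Sum.inl s ∈ St t)

theorem measurable_V_mWV (S : AICMSS Ω P) {t s : ℕ} (hs : s ≤ t) :
    Measurable[S.mWV t] (S.V s) := by
  have h0 : Measurable[MeasurableSpace.comap (Sum.elim S.W S.V (Sum.inr s)) inferInstance]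
      (Sum.elim S.W S.V (Sum.inr s)) := Measurable.of_comap_le le_rfl
  refine h0.mono ?_ le_rfl
  exact le_biSup
    (fun i => MeasurableSpace.comap (Sum.elim S.W S.V i) (inferInstance : MeasurableSpace ℝ))
    (by exact hs : Sum.inr s ∈ St t)

theorem measurable_XU_mWV (S : AICMSS Ω P) (t : ℕ) :
    ∀ s, s ≤ t → Measurable[S.mWV t] (S.X s) ∧ Measurable[S.mWV t] (S.U s) := by
  intro s
  induction s using Nat.strong_induction_on with
  | _ s ih =>
    intro hst
    have hX : Measurable[S.mWV t] (S.X s) := by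
      match s, ih, hst with
      | 0, _, _ =>
        have : S.X 0 = fun _ => S.x0 := funext fun ω => S.hX0 ω
        rw [this]; exact measurable_const
      | (r+1), ih, hst =>
        have : S.X (r+1) = fun ω => S.a * S.X r ω + S.b * S.U r ω + S.W r ω :=
          funext fun ω => S.hXrec r ω
        rw [this]
        have hr : r ≤ t := le_trans (Nat.le_succ r) hst
        obtain ⟨hXr, hUr⟩ := ih r (Nat.lt_succ_self r) hr
        exact ((measurable_const.mul hXr).add (measurable_const.mul hUr)).add
          (S.measurable_W_mWV hr)
    refine ⟨hX, ?_⟩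
    have hXall : ∀ r, r ≤ s → Measurable[S.mWV t] (S.X r) := by
      intro r hr
      rcases lt_or_eq_of_le hr with h | h
      · exact (ih r h (le_trans hr hst)).1
      · exact h ▸ hX
    have hG : Measurable[S.mWV t] (S.G s) := by
      by_cases hs1 : s ≤ 1
      · have : S.G s = fun _ => -(S.aInit / S.bInit) := funext fun ω => S.hGinit s ω hs1
        rw [this]; exact measurable_const
      · push_neg at hs1
        have hs2 : 2 ≤ s := hs1
        obtain ⟨n, rfl⟩ : ∃ n, s = n + 1 := ⟨s - 1, (Nat.succ_pred_eq_of_pos (by omega)).symm⟩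
        have hn1 : 1 ≤ n := by omega
        have hsub : n + 1 - 1 = n := rfl
        -- θhat components
        have hθcomp : ∀ j : Fin 2,
            Measurable[S.mWV t] fun ω => WithLp.equiv 2 (Fin 2 → ℝ) (S.θhat n ω) j := by
          intro j
          have hrw : (fun ω => WithLp.equiv 2 (Fin 2 → ℝ) (S.θhat n ω) j) =
              fun ω => ∑ k : Fin n,
                (∑ l : Fin 2,
                  pinv (Matrix.of fun i i' : Fin 2 =>
                    ∑ k' : Fin n,
                      (if i = 0 then S.X (k'.1 + 1) ω else S.U (k'.1 + 1) ω) *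
                      (if i' = 0 then S.X (k'.1 + 1) ω else S.U (k'.1 + 1) ω)) j l *
                  (if l = 0 then S.X (k.1 + 1) ω else S.U (k.1 + 1) ω)) *
                S.X (k.1 + 2) ω := by
            funext ω
            rw [S.hθ n ω hn1]
            rw [Equiv.apply_symm_apply]
            rw [Matrix.mulVec]
            simp only [dotProduct, Matrix.mul_apply, Matrix.transpose_apply,
              Matrix.of_apply, Fin.sum_univ_two]
            congr 1
          rw [hrw]
          have hMM : Measurable[S.mWV t] fun ω => (fun i i' : Fin 2 =>
              ∑ k' : Fin n,
                (if i = 0 then S.X (k'.1 + 1) ω else S.U (k'.1 + 1) ω) *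
                (if i' = 0 then S.X (k'.1 + 1) ω else S.U (k'.1 + 1) ω)) := by
            refine Aux.mpl _ fun i => Aux.mpl _ fun i' => ?_
            refine Aux.msum _ _ fun k' _ => ?_
            have hk1 : k'.1 + 1 ≤ t := by
              have := k'.2; omega
            have hXU : ∀ i'' : Fin 2, Measurable[S.mWV t]
                fun ω => if i'' = 0 then S.X (k'.1 + 1) ω else S.U (k'.1 + 1) ω := by
              intro i''
              by_cases hi : i'' = 0
              · simp only [if_pos hi]
                exact (ih (k'.1 + 1) (by omega) hk1).1
              · simp only [if_neg hi]
                exact (ih (k'.1 + 1) (by omega) hk1).2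
            exact (hXU i).mul (hXU i')
          refine Aux.msum _ _ fun k _ => ?_
          refine Measurable.mul ?_ (hXall (k.1 + 2) (by have := k.2; omega))
          refine Aux.msum _ _ fun l _ => ?_
          refine Measurable.mul (Aux.mcomp (Aux.measurable_pinv_entry j l) hMM) ?_
          by_cases hl : l = 0
          · simp only [if_pos hl]
            exact hXall (k.1 + 1) (by have := k.2; omega)
          · simp only [if_neg hl]
            exact (ih (k.1 + 1) (by have := k.2; omega) (by have := k.2; omega)).2
        have : S.G (n+1) = fun ω =>
            -(WithLp.equiv 2 (Fin 2 → ℝ) (S.θhat n ω) 0 /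
              WithLp.equiv 2 (Fin 2 → ℝ) (S.θhat n ω) 1) := by
          funext ω
          rw [S.hG (n+1) ω hs2]
          norm_num
        rw [this]

        exact ((hθcomp 0).div (hθcomp 1)).neg
    have : S.U s = fun ω => sat S.D (S.G s ω * S.X s ω) + S.V s ω :=
      funext fun ω => S.hU s ω
    rw [this]
    exact (Aux.mcomp (Aux.measurable_sat S.D) (hG.mul hX)).add (S.measurable_V_mWV hst)

theorem measurable_Z_mWV (S : AICMSS Ω P) (t : ℕ) {j : ℕ} (hj : j ≤ t) :
    Measurable[S.mWV t] (S.Z j) := by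
  obtain ⟨hX, hU⟩ := S.measurable_XU_mWV t j hj
  have h : Measurable[S.mWV t] fun ω => (![S.X j ω, S.U j ω] : Fin 2 → ℝ) := by
    refine Aux.mpl _ fun i => ?_
    fin_cases i
    · simpa using hX
    · simpa using hU
  exact (Aux.mcomp (WithLp.measurable_toLp 2 (Fin 2 → ℝ)) h :)

theorem natural_le (S : AICMSS Ω P) (hSM : ∀ t, StronglyMeasurable (S.Z t)) (t : ℕ) :
    (MeasureTheory.Filtration.natural S.Z hSM) t ≤ S.mWV t := by
  refine iSup₂_le fun j hj => ?_
  exact (S.measurable_Z_mWV t hj).comap_le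

theorem indepV (S : AICMSS Ω P) (t : ℕ) :
    Indep (S.mWV t) (MeasurableSpace.comap (S.V (t + 1)) inferInstance) P := by
  have h_le : ∀ i : ℕ ⊕ ℕ, MeasurableSpace.comap (Sum.elim S.W S.V i)
      (inferInstance : MeasurableSpace ℝ) ≤ (inferInstance : MeasurableSpace Ω) := by
    intro i
    cases i with
    | inl s => exact (S.measW s).comap_le
    | inr s => exact (S.measV s).comap_le
  have h := ProbabilityTheory.indep_biSup_compl h_le S.hIndep (St t)
  refine indep_of_indep_of_le_right (indep_of_indep_of_le_left h le_rfl) ?_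
  have hmem : Sum.inr (t + 1) ∈ (St t)ᶜ := by
    intro hc
    exact absurd (by exact hc : t + 1 ≤ t) (by omega)
  exact le_biSup
    (fun i => MeasurableSpace.comap (Sum.elim S.W S.V i) (inferInstance : MeasurableSpace ℝ))
    hmem
end AICMSS

namespace Aux

theorem measurable_sign : Measurable Real.sign := by
  have : Real.sign = fun r : ℝ => if r < 0 then (-1 : ℝ) else if 0 < r then 1 else 0 :=
    funext fun r => rfl
  rw [this]
  exact Measurable.ite (measurableSet_lt measurable_id measurable_const) measurable_const
    (Measurable.ite (measurableSet_lt measurable_const measurable_id) measurable_const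
      measurable_const)

theorem sign_mul_self (x : ℝ) : x * Real.sign x = |x| := by
  rcases lt_trichotomy x 0 with h | h | h
  · rw [Real.sign_of_neg h, abs_of_neg h]; ring
  · simp [h]
  · rw [Real.sign_of_pos h, abs_of_pos h]; ring

theorem abs_sign_le (x : ℝ) : |Real.sign x| ≤ 1 := by
  rcases lt_trichotomy x 0 with h | h | h
  · rw [Real.sign_of_neg h]; norm_num
  · simp [h]
  · rw [Real.sign_of_pos h]; norm_num

theorem intInt {f : ℝ → ℝ} (hf : Measurable f) {M : ℝ} (hb : ∀ x, |f x| ≤ M) (a b : ℝ) :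
    IntervalIntegrable f MeasureTheory.volume a b := by
  rw [intervalIntegrable_iff]
  refine MeasureTheory.Integrable.mono'
    (g := fun _ => M)
    (MeasureTheory.integrableOn_const measure_Ioc_lt_top.ne)
    hf.aestronglyMeasurable (Filter.Eventually.of_forall fun x => ?_)
  simpa using hb x

theorem ae_ne_zero : ∀ᵐ x ∂(MeasureTheory.volume : MeasureTheory.Measure ℝ), x ≠ 0 := by
  rw [MeasureTheory.ae_iff]
  have : {x : ℝ | ¬x ≠ 0} = {(0 : ℝ)} := by ext x; simp
  rw [this]
  exact Real.volume_singleton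

theorem integral_sign_Icc {C : ℝ} (hC : 0 < C) :
    ∫ x in Set.Icc (-C) C, Real.sign x = 0 := by
  rw [MeasureTheory.integral_Icc_eq_integral_Ioc,
    ← intervalIntegral.integral_of_le (by linarith : -C ≤ C)]
  have h1 : IntervalIntegrable Real.sign MeasureTheory.volume (-C) 0 :=
    intInt measurable_sign abs_sign_le _ _
  have h2 : IntervalIntegrable Real.sign MeasureTheory.volume 0 C :=
    intInt measurable_sign abs_sign_le _ _
  rw [← intervalIntegral.integral_add_adjacent_intervals h1 h2]
  have e1 : ∫ x in (-C)..0, Real.sign x = ∫ x in (-C)..0, (-1 : ℝ) := by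
    refine intervalIntegral.integral_congr_ae ?_
    filter_upwards [ae_ne_zero] with x hx hmem
    rw [Set.uIoc_of_le (by linarith : -C ≤ 0)] at hmem
    exact Real.sign_of_neg (lt_of_le_of_ne hmem.2 hx)
  have e2 : ∫ x in (0 : ℝ)..C, Real.sign x = ∫ x in (0 : ℝ)..C, (1 : ℝ) := by
    refine intervalIntegral.integral_congr_ae ?_
    filter_upwards with x hmem
    rw [Set.uIoc_of_le (by linarith : (0:ℝ) ≤ C)] at hmem
    exact Real.sign_of_pos hmem.1
  rw [e1, e2, intervalIntegral.integral_const, intervalIntegral.integral_const]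
  simp

theorem integral_abs_Icc {C : ℝ} (hC : 0 < C) :
    ∫ x in Set.Icc (-C) C, |x| = C ^ 2 := by
  rw [MeasureTheory.integral_Icc_eq_integral_Ioc,
    ← intervalIntegral.integral_of_le (by linarith : -C ≤ C)]
  have h1 : IntervalIntegrable (fun x : ℝ => |x|) MeasureTheory.volume (-C) 0 :=
    continuous_abs.intervalIntegrable _ _
  have h2 : IntervalIntegrable (fun x : ℝ => |x|) MeasureTheory.volume 0 C :=
    continuous_abs.intervalIntegrable _ _
  rw [← intervalIntegral.integral_add_adjacent_intervals h1 h2]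
  have e1 : ∫ x in (-C)..0, |x| = ∫ x in (-C)..0, -x := by
    refine intervalIntegral.integral_congr fun x hx => ?_
    rw [Set.uIcc_of_le (by linarith : -C ≤ 0)] at hx
    exact abs_of_nonpos hx.2
  have e2 : ∫ x in (0 : ℝ)..C, |x| = ∫ x in (0 : ℝ)..C, x := by
    refine intervalIntegral.integral_congr fun x hx => ?_
    rw [Set.uIcc_of_le (by linarith : (0:ℝ) ≤ C)] at hx
    exact abs_of_nonneg hx.1
  rw [e1, e2, intervalIntegral.integral_neg, integral_id, integral_id]
  ring

theorem integral_uniformLaw {C : ℝ} (hC : 0 < C) (f : ℝ → ℝ) :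
    ∫ x, f x ∂(uniformLaw C) = (2 * C)⁻¹ * ∫ x in Set.Icc (-C) C, f x := by
  rw [uniformLaw, MeasureTheory.integral_smul_measure, ENNReal.toReal_inv,
    ENNReal.toReal_ofReal (by linarith : (0:ℝ) ≤ 2 * C)]
  rfl

theorem integral_sign_uniformLaw {C : ℝ} (hC : 0 < C) :
    ∫ x, Real.sign x ∂(uniformLaw C) = 0 := by
  rw [integral_uniformLaw hC, integral_sign_Icc hC, mul_zero]

theorem integral_abs_uniformLaw {C : ℝ} (hC : 0 < C) :
    ∫ x, |x| ∂(uniformLaw C) = C / 2 := by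
  rw [integral_uniformLaw hC, integral_abs_Icc hC]
  field_simp

theorem uniformLaw_compl_Icc {C : ℝ} :
    uniformLaw C (Set.Icc (-C) C)ᶜ = 0 := by
  rw [uniformLaw]
  simp only [MeasureTheory.Measure.smul_apply]
  rw [MeasureTheory.Measure.restrict_apply (measurableSet_Icc.compl)]
  rw [Set.compl_inter_self]
  simp

end Aux


/-- **Lemma (lower bound on `E[|B_{t+1}(ζ)| | F_t]`).** -/
theorem lower_bound_B {Ω : Type*} [MeasurableSpace Ω] (P : Measure Ω)
    [IsProbabilityMeasure P] (S : AICMSS Ω P)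
    (hSM : ∀ t, StronglyMeasurable (S.Z t)) :
    ∀ ζ : E2, ∀ t : ℕ,
      ∀ᵐ ω ∂P,
        |WithLp.equiv 2 (Fin 2 → ℝ) ζ 1| * S.C / 2 ≤
          cexp P ((MeasureTheory.Filtration.natural S.Z hSM) t)
            (fun ω' =>
              |cexp P ((MeasureTheory.Filtration.natural S.Z hSM) t)
                  (fun ω'' => WithLp.equiv 2 (Fin 2 → ℝ) ζ 0 * S.X (t + 1) ω'' +
                    WithLp.equiv 2 (Fin 2 → ℝ) ζ 1 *
                      sat S.D (S.G (t + 1) ω'' * S.X (t + 1) ω'')) ω' +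
                WithLp.equiv 2 (Fin 2 → ℝ) ζ 1 * S.V (t + 1) ω'|) ω := by
  intro ζ t
  set F := MeasureTheory.Filtration.natural S.Z hSM with hF_def
  have hm : F t ≤ (inferInstance : MeasurableSpace Ω) := F.le t
  set ζ0 := WithLp.equiv 2 (Fin 2 → ℝ) ζ 0 with hζ0
  set ζ1 := WithLp.equiv 2 (Fin 2 → ℝ) ζ 1 with hζ1
  set Vf := S.V (t + 1) with hVf
  set g := cexp P (F t) (fun ω'' => ζ0 * S.X (t + 1) ω'' +
    ζ1 * sat S.D (S.G (t + 1) ω'' * S.X (t + 1) ω'')) with hg_def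
  have hg_meas : StronglyMeasurable[F t] g := stronglyMeasurable_condExp
  have hg_int : Integrable g P := integrable_condExp
  have hVmeas : Measurable Vf := S.measV (t + 1)
  -- V is a.s. bounded by C
  have hVbd : ∀ᵐ ω ∂P, Vf ω ∈ Set.Icc (-S.C) S.C := by
    have hnull : P (Vf ⁻¹' (Set.Icc (-S.C) S.C)ᶜ) = 0 := by
      rw [← Measure.map_apply hVmeas measurableSet_Icc.compl, hVf, S.hVlaw (t + 1)]
      exact Aux.uniformLaw_compl_Icc
    rw [MeasureTheory.ae_iff]
    convert hnull using 2
    rfl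
  -- independence of V_{t+1} and F_t
  have hIndepVm : Indep (MeasurableSpace.comap Vf inferInstance) (F t) P :=
    indep_of_indep_of_le_right (S.indepV t).symm (S.natural_le hSM t)
  -- the auxiliary functions
  set h : Ω → ℝ := fun ω => Real.sign ζ1 * Real.sign (Vf ω) with hh
  set k : Ω → ℝ := fun ω => |ζ1| * |Vf ω| with hk
  have h_meas : Measurable h := measurable_const.mul (Aux.measurable_sign.comp hVmeas)
  have h_bd : ∀ ω, |h ω| ≤ 1 := fun ω => by
    rw [hh]
    simp only
    rw [abs_mul]
    exact mul_le_one₀ (Aux.abs_sign_le _) (abs_nonneg _) (Aux.abs_sign_le _)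
  have hVcm : Measurable[MeasurableSpace.comap Vf inferInstance] Vf :=
    Measurable.of_comap_le le_rfl
  have h_m1 : StronglyMeasurable[MeasurableSpace.comap Vf inferInstance] h := by
    exact (measurable_const.mul (Aux.mcomp Aux.measurable_sign hVcm)).stronglyMeasurable
  have k_m1 : StronglyMeasurable[MeasurableSpace.comap Vf inferInstance] k := by
    exact (measurable_const.mul (Aux.mcomp measurable_abs hVcm)).stronglyMeasurable
  -- integrability
  have h_int : Integrable h P := by
    refine Integrable.mono' (g := fun _ => 1) (integrable_const 1)
      h_meas.aestronglyMeasurable (Filter.Eventually.of_forall fun ω => ?_)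
    simpa using h_bd ω
  have hgh_int : Integrable (fun ω => g ω * h ω) P := by
    refine Integrable.mono' (g := fun ω => |g ω|) hg_int.abs
      ((hg_meas.mono hm).aestronglyMeasurable.mul h_meas.aestronglyMeasurable)
      (Filter.Eventually.of_forall fun ω => ?_)
    rw [Real.norm_eq_abs, abs_mul]
    calc |g ω| * |h ω| ≤ |g ω| * 1 := mul_le_mul_of_nonneg_left (h_bd ω) (abs_nonneg _)
    _ = |g ω| := mul_one _
  have hk_int : Integrable k P := by
    refine Integrable.mono' (g := fun _ => |ζ1| * S.C) (integrable_const _)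
      (measurable_const.mul (measurable_abs.comp hVmeas)).aestronglyMeasurable
      (hVbd.mono fun ω hω => ?_)
    rw [hk]
    simp only
    rw [Real.norm_eq_abs, abs_mul, abs_abs, abs_abs]
    refine mul_le_mul_of_nonneg_left ?_ (abs_nonneg _)
    rw [abs_le]
    exact ⟨hω.1, hω.2⟩
  have hζV_int : Integrable (fun ω => ζ1 * Vf ω) P := by
    refine Integrable.mono' (g := fun _ => |ζ1| * S.C) (integrable_const _)
      (measurable_const.mul hVmeas).aestronglyMeasurable
      (hVbd.mono fun ω hω => ?_)
    rw [Real.norm_eq_abs, abs_mul]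
    refine mul_le_mul_of_nonneg_left ?_ (abs_nonneg _)
    rw [abs_le]
    exact ⟨hω.1, hω.2⟩
  have hf2_int : Integrable (fun ω => |g ω + ζ1 * Vf ω|) P := (hg_int.add hζV_int).abs
  have hf1_int : Integrable (fun ω => g ω * h ω + k ω) P := hgh_int.add hk_int
  -- pointwise inequality
  have hpt : ∀ ω, g ω * h ω + k ω ≤ |g ω + ζ1 * Vf ω| := by
    intro ω
    have e1 : ζ1 * Real.sign ζ1 = |ζ1| := Aux.sign_mul_self ζ1
    have e2 : Vf ω * Real.sign (Vf ω) = |Vf ω| := Aux.sign_mul_self (Vf ω)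
    have h1 : g ω * h ω + k ω = (g ω + ζ1 * Vf ω) * h ω := by
      rw [hh, hk]
      simp only
      rw [← e1, ← e2]
      ring
    rw [h1]
    calc (g ω + ζ1 * Vf ω) * h ω ≤ |(g ω + ζ1 * Vf ω) * h ω| := le_abs_self _
    _ = |g ω + ζ1 * Vf ω| * |h ω| := abs_mul _ _
    _ ≤ |g ω + ζ1 * Vf ω| * 1 := mul_le_mul_of_nonneg_left (h_bd ω) (abs_nonneg _)
    _ = |g ω + ζ1 * Vf ω| := mul_one _
  -- conditional expectation comparison
  have hmono : P[fun ω => g ω * h ω + k ω|F t] ≤ᵐ[P] P[(fun ω => |g ω + ζ1 * Vf ω|)|F t] :=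
    condExp_mono hf1_int hf2_int (Filter.Eventually.of_forall hpt)
  -- conditional expectations of h and k
  have hEh : P[h|F t] =ᵐ[P] fun _ => ∫ ω, h ω ∂P :=
    condExp_indep_eq hVmeas.comap_le hm h_m1 hIndepVm
  have hEk : P[k|F t] =ᵐ[P] fun _ => ∫ ω, k ω ∂P :=
    condExp_indep_eq hVmeas.comap_le hm k_m1 hIndepVm
  -- integral values
  have hIh : ∫ ω, h ω ∂P = 0 := by
    rw [hh]
    simp only
    rw [MeasureTheory.integral_const_mul]
    have : ∫ ω, Real.sign (Vf ω) ∂P = ∫ x, Real.sign x ∂(P.map Vf) :=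
      (MeasureTheory.integral_map hVmeas.aemeasurable
        Aux.measurable_sign.aestronglyMeasurable).symm
    rw [this, hVf, S.hVlaw (t + 1), Aux.integral_sign_uniformLaw S.hCpos, mul_zero]
  have hIk : ∫ ω, k ω ∂P = |ζ1| * (S.C / 2) := by
    rw [hk]
    simp only
    rw [MeasureTheory.integral_const_mul]
    have : ∫ ω, |Vf ω| ∂P = ∫ x, |x| ∂(P.map Vf) :=
      (MeasureTheory.integral_map hVmeas.aemeasurable
        measurable_abs.aestronglyMeasurable).symm
    rw [this, hVf, S.hVlaw (t + 1), Aux.integral_abs_uniformLaw S.hCpos]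
  -- decompose E[f1|m]
  have hadd : P[fun ω => g ω * h ω + k ω|F t] =ᵐ[P]
      P[fun ω => g ω * h ω|F t] + P[k|F t] := condExp_add hgh_int hk_int _
  have hmul : P[fun ω => g ω * h ω|F t] =ᵐ[P] fun ω => g ω * (P[h|F t]) ω := by
    have := condExp_mul_of_stronglyMeasurable_left hg_meas hgh_int h_int
    exact this
  -- combine
  filter_upwards [hmono, hadd, hmul, hEh, hEk] with ω h1 h2 h3 h4 h5
  have hval : (P[fun ω => g ω * h ω + k ω|F t]) ω = |ζ1| * (S.C / 2) := by
    rw [h2]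
    simp only [Pi.add_apply]
    rw [h3, h4, h5, hIh, hIk, mul_zero, zero_add]
  show |ζ1| * S.C / 2 ≤ (P[(fun ω' => |g ω' + ζ1 * Vf ω'|)|F t]) ω
  rw [mul_div_assoc]
  calc |ζ1| * (S.C / 2) = (P[fun ω => g ω * h ω + k ω|F t]) ω := hval.symm
  _ ≤ _ := h1


end
end
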